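/- arXiv:1905.07602 — 6 statements merged into one kernel-verified Lean document; each statement's English description precedes it below -/
import Mathlib

section
/- Let (Xₙ, πₙ) be an inverse sequence of compact, connected, locally connected metric spaces such that each bonding map πₙ is surjective and each fiber πₙ⁻¹(x) is connected. Then the inverse limit lim← (Xₙ, πₙ) is a connected and locally connected compact metric space. -/
open Set Topology

section Aux

variable {α β : Type*} [TopologicalSpace α] [TopologicalSpace β]

/-- Pulling back a preconnected set along a closed map with nonempty preconnected
fibers yields a preconnected set. -/
theorem aux_preimage_preconnected {g : α → β} (hcl : IsClosedMap g) {S : Set β}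
    (hS : IsPreconnected S)
    (hfibc : ∀ b ∈ S, IsPreconnected (g ⁻¹' {b}))
    (hfibn : ∀ b ∈ S, (g ⁻¹' {b}).Nonempty) :
    IsPreconnected (g ⁻¹' S) := by
  rintro u v hu hv hcov ⟨p, hpS, hpu⟩ ⟨q, hqS, hqv⟩
  by_cases hx : ∃ b ∈ S, (g ⁻¹' {b} ∩ (u ∩ v)).Nonempty
  · obtain ⟨b, hb, z, hz1, hz2⟩ := hx
    refine ⟨z, ?_, hz2⟩
    have hgz : g z = b := hz1
    show g z ∈ S
    rw [hgz]
    exact hb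
  push_neg at hx
  have hfsub : ∀ b ∈ S, g ⁻¹' {b} ⊆ u ∪ v := by
    intro b hb z hz
    have hgz : g z = b := hz
    exact hcov (mem_preimage.mpr (by rw [hgz]; exact hb))
  have key : ∀ b ∈ S, g ⁻¹' {b} ⊆ u ∨ g ⁻¹' {b} ⊆ v := by
    intro b hb
    by_contra hcon
    push_neg at hcon
    obtain ⟨hnu, hnv⟩ := hcon
    obtain ⟨z1, hz1f, hz1⟩ := not_subset.mp hnu
    obtain ⟨z2, hz2f, hz2⟩ := not_subset.mp hnv
    have h1 : z1 ∈ v := (hfsub b hb hz1f).resolve_left hz1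
    have h2 : z2 ∈ u := (hfsub b hb hz2f).resolve_right hz2
    have hne := hfibc b hb u v hu hv (hfsub b hb) ⟨z2, hz2f, h2⟩ ⟨z1, hz1f, h1⟩
    rw [hx b hb] at hne
    exact hne.ne_empty rfl
  set u' : Set β := (g '' uᶜ)ᶜ with hu'def
  set v' : Set β := (g '' vᶜ)ᶜ with hv'def
  have hu' : IsOpen u' := (hcl _ hu.isClosed_compl).isOpen_compl
  have hv' : IsOpen v' := (hcl _ hv.isClosed_compl).isOpen_compl
  have memu' : ∀ b, g ⁻¹' {b} ⊆ u → b ∈ u' := by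
    intro b hsub
    simp only [hu'def, mem_compl_iff, mem_image, not_exists, not_and]
    intro z hz hgz
    exact hz (hsub (show g z ∈ ({b} : Set β) from hgz))
  have memv' : ∀ b, g ⁻¹' {b} ⊆ v → b ∈ v' := by
    intro b hsub
    simp only [hv'def, mem_compl_iff, mem_image, not_exists, not_and]
    intro z hz hgz
    exact hz (hsub (show g z ∈ ({b} : Set β) from hgz))
  have hcov' : S ⊆ u' ∪ v' := by
    intro b hb
    rcases key b hb with h | h
    · exact Or.inl (memu' b h)
    · exact Or.inr (memv' b h)
  have hgp : g ⁻¹' {g p} ⊆ u := by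
    rcases key (g p) hpS with h | h
    · exact h
    · have hmem : p ∈ g ⁻¹' {g p} ∩ (u ∩ v) := ⟨rfl, hpu, h rfl⟩
      rw [hx (g p) hpS] at hmem
      exact absurd hmem (notMem_empty p)
  have hgq : g ⁻¹' {g q} ⊆ v := by
    rcases key (g q) hqS with h | h
    · have hmem : q ∈ g ⁻¹' {g q} ∩ (u ∩ v) := ⟨rfl, h rfl, hqv⟩
      rw [hx (g q) hqS] at hmem
      exact absurd hmem (notMem_empty q)
    · exact h
  obtain ⟨b, hbS, hbu', hbv'⟩ :=
    hS u' v' hu' hv' hcov' ⟨g p, hpS, memu' _ hgp⟩ ⟨g q, hqS, memv' _ hgq⟩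
  obtain ⟨z, hz⟩ := hfibn b hbS
  have hgz : g z = b := hz
  have hzu : z ∈ u := by
    by_contra hzu
    exact hbu' ⟨z, hzu, hgz⟩
  have hzv : z ∈ v := by
    by_contra hzv
    exact hbv' ⟨z, hzv, hgz⟩
  exact ⟨z, mem_preimage.mpr (by rw [hgz]; exact hbS), hzu, hzv⟩

/-- The intersection of a decreasing sequence of nonempty compact connected sets
in a Hausdorff space is connected. -/
theorem aux_isConnected_iInter [T2Space α] (C : ℕ → Set α)
    (hcomp : ∀ k, IsCompact (C k)) (hconn : ∀ k, IsConnected (C k))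
    (hanti : ∀ k, C (k+1) ⊆ C k) : IsConnected (⋂ k, C k) := by
  have hcl : ∀ k, IsClosed (C k) := fun k => (hcomp k).isClosed
  have hKcl : IsClosed (⋂ k, C k) := isClosed_iInter hcl
  have hKcomp : IsCompact (⋂ k, C k) :=
    (hcomp 0).of_isClosed_subset hKcl (iInter_subset _ 0)
  have hne : (⋂ k, C k).Nonempty :=
    IsCompact.nonempty_iInter_of_sequence_nonempty_isCompact_isClosed C hanti
      (fun k => (hconn k).nonempty) (hcomp 0) hcl
  have hmono : ∀ j k, j ≤ k → C k ⊆ C j := by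
    intro j k hjk
    exact antitone_nat_of_succ_le (fun i => hanti i) hjk
  refine ⟨hne, isPreconnected_closed_iff.2 ?_⟩
  intro t t' ht ht' hcov ⟨p, hp⟩ ⟨q, hq⟩
  by_contra hem
  rw [not_nonempty_iff_eq_empty] at hem
  set K := ⋂ k, C k with hK
  have hA : IsCompact (K ∩ t) := hKcomp.inter_right ht
  have hB : IsCompact (K ∩ t') := hKcomp.inter_right ht'
  have hBcl : IsClosed (K ∩ t') := hKcl.inter ht'
  have hd : Disjoint (K ∩ t) (K ∩ t') := by
    rw [disjoint_iff_inter_eq_empty]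
    rw [show (K ∩ t) ∩ (K ∩ t') = K ∩ (t ∩ t') by ext z; simp; tauto]
    exact hem
  obtain ⟨U, V, hU, hV, hAU, hBV, hUV⟩ :=
    SeparatedNhds.of_isCompact_isCompact_isClosed hA hB hBcl hd
  have hKUV : K ⊆ U ∪ V := by
    intro z hz
    rcases hcov hz with h | h
    · exact Or.inl (hAU ⟨hz, h⟩)
    · exact Or.inr (hBV ⟨hz, h⟩)
  have hex : ∃ k, C k ⊆ U ∪ V := by
    by_contra hno
    push_neg at hno
    have h1 : (⋂ k, C k \ (U ∪ V)).Nonempty := by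
      apply IsCompact.nonempty_iInter_of_sequence_nonempty_isCompact_isClosed
      · exact fun k => diff_subset_diff_left (hanti k)
      · intro k
        obtain ⟨z, hz1, hz2⟩ := not_subset.mp (hno k)
        exact ⟨z, hz1, hz2⟩
      · exact (hcomp 0).diff (hU.union hV)
      · exact fun k => (hcl k).sdiff (hU.union hV)
    obtain ⟨z, hz⟩ := h1
    simp only [mem_iInter, mem_diff] at hz
    have hzK : z ∈ K := mem_iInter.2 fun k => (hz k).1
    exact (hz 0).2 (hKUV hzK)
  obtain ⟨k, hk⟩ := hex
  have hpCk : p ∈ C k := (iInter_subset C k) hp.1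
  have hqCk : q ∈ C k := (iInter_subset C k) hq.1
  have hpU : p ∈ U := hAU ⟨hp.1, hp.2⟩
  have hqV : q ∈ V := hBV ⟨hq.1, hq.2⟩
  obtain ⟨z, _, hz2⟩ :=
    (hconn k).isPreconnected U V hU hV hk ⟨p, hpCk, hpU⟩ ⟨q, hqCk, hqV⟩
  exact (hUV.ne_of_mem hz2.1 hz2.2) rfl

end Aux

section Down

variable {X : ℕ → Type} [∀ n, TopologicalSpace (X n)]

/-- Iterated bonding map from `X (m+k)` down to `X m`. -/
def auxDown (f : ∀ n, X (n+1) → X n) (m : ℕ) : (k : ℕ) → X (m + k) → X m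
  | 0, x => x
  | k+1, x => auxDown f m k (f (m + k) x)

lemma auxDown_continuous (f : ∀ n, X (n+1) → X n) (hf : ∀ n, Continuous (f n))
    (m : ℕ) : ∀ k, Continuous (auxDown f m k)
  | 0 => continuous_id
  | k+1 => (auxDown_continuous f hf m k).comp (hf (m + k))

lemma aux_apply_cast (y : ∀ m, X m) {i j : ℕ} (hij : i = j) (h : X i = X j) :
    cast h (y i) = y j := by subst hij; rfl

lemma aux_cast_f (f : ∀ n, X (n+1) → X n) {i j : ℕ} (hij : i = j)
    (h1 : X (i+1) = X (j+1)) (h2 : X i = X j) (x : X (i+1)) :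
    cast h2 (f i x) = f j (cast h1 x) := by subst hij; rfl

lemma auxDown_succ (f : ∀ n, X (n+1) → X n) (k : ℕ) :
    ∀ (m : ℕ) (x : X (m + (k+1))) (h : X (m + (k+1)) = X ((m+1) + k)),
      auxDown f m (k+1) x = f m (auxDown f (m+1) k (cast h x)) := by
  induction k with
  | zero => intro m x h; rfl
  | succ k ih =>
    intro m x h
    have e : m + (k+1) = (m+1) + k := by omega
    have h2 : X (m + (k+1)) = X ((m+1) + k) := congrArg X e
    have step : auxDown f m (k+1+1) x = auxDown f m (k+1) (f (m + (k+1)) x) := rfl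
    rw [step, ih m (f (m + (k+1)) x) h2]
    have step2 : auxDown f (m+1) (k+1) (cast h x) =
        auxDown f (m+1) k (f ((m+1) + k) (cast h x)) := rfl
    rw [step2]
    exact congrArg (fun z => f m (auxDown f (m+1) k z)) (aux_cast_f f e h h2 x)

lemma auxDown_thread (f : ∀ n, X (n+1) → X n) (y : ∀ m, X m) (m : ℕ) :
    ∀ k, (∀ i, i < m + k → f i (y (i+1)) = y i) → auxDown f m k (y (m + k)) = y m := by
  intro k
  induction k with
  | zero => intro _; rfl
  | succ k ih =>
    intro hy
    show auxDown f m k (f (m + k) (y (m + k + 1))) = y m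
    rw [hy (m + k) (by omega)]
    exact ih (fun i hi => hy i (by omega))

/-- A retraction-style map of the product onto the set of partial threads of length `K`. -/
def auxPsi (f : ∀ n, X (n+1) → X n) (K : ℕ) (y : ∀ m, X m) (m : ℕ) : X m :=
  if h : m < K then auxDown f m (K - m) (y (m + (K - m))) else y m

lemma auxPsi_compat (f : ∀ n, X (n+1) → X n) (K : ℕ) (y : ∀ m, X m) :
    ∀ m, m < K → f m (auxPsi f K y (m+1)) = auxPsi f K y m := by
  intro m hm
  by_cases h1 : m + 1 < K
  · simp only [auxPsi, dif_pos h1, dif_pos hm]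
    rw [show K - m = (K - (m+1)) + 1 by omega]
    have h : X (m + ((K - (m+1)) + 1)) = X ((m+1) + (K - (m+1))) := congrArg X (by omega)
    rw [auxDown_succ f (K - (m+1)) m (y (m + ((K - (m+1)) + 1))) h]
    exact congrArg (fun z => f m (auxDown f (m+1) (K - (m+1)) z))
      (aux_apply_cast y (by omega) h).symm ▸ rfl
  · have hK : K = m + 1 := by omega
    subst hK
    simp only [auxPsi, dif_neg h1, dif_pos hm]
    rw [show m + 1 - m = 1 by omega]
    rfl

lemma auxPsi_eq_self (f : ∀ n, X (n+1) → X n) (K : ℕ) (y : ∀ m, X m)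
    (hy : ∀ i, i < K → f i (y (i+1)) = y i) : auxPsi f K y = y := by
  funext m
  by_cases h : m < K
  · simp only [auxPsi, dif_pos h]
    exact auxDown_thread f y m (K - m) (fun i hi => hy i (by omega))
  · simp only [auxPsi, dif_neg h]

lemma auxPsi_continuous (f : ∀ n, X (n+1) → X n) (hf : ∀ n, Continuous (f n)) (K : ℕ) :
    Continuous (auxPsi f K) := by
  apply continuous_pi
  intro m
  by_cases h : m < K
  · simp only [auxPsi, dif_pos h]
    exact (auxDown_continuous f hf m (K - m)).comp (continuous_apply _)
  · simp only [auxPsi, dif_neg h]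
    exact continuous_apply m

end Down

/-- The inverse limit of an inverse sequence of compact, connected, locally connected
metric spaces with surjective bonding maps having connected fibers is a connected and
locally connected compact metrizable space. -/
theorem stmt3 (X : ℕ → Type) [∀ n, MetricSpace (X n)] [∀ n, CompactSpace (X n)]
    [∀ n, ConnectedSpace (X n)] [∀ n, LocallyConnectedSpace (X n)]
    (f : ∀ n, X (n+1) → X n) (hf : ∀ n, Continuous (f n))
    (hsurj : ∀ n, Function.Surjective (f n))
    (hfib : ∀ n (x : X n), IsConnected (f n ⁻¹' {x})) :
    ConnectedSpace {x : ∀ n, X n // ∀ n, f n (x (n+1)) = x n} ∧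
    LocallyConnectedSpace {x : ∀ n, X n // ∀ n, f n (x (n+1)) = x n} ∧
    CompactSpace {x : ∀ n, X n // ∀ n, f n (x (n+1)) = x n} ∧
    TopologicalSpace.MetrizableSpace {x : ∀ n, X n // ∀ n, f n (x (n+1)) = x n} := by
  classical
  set S : Set (∀ n, X n) := {x | ∀ n, f n (x (n+1)) = x n} with hSdef
  -- the partial-thread sets
  set Lk : ℕ → Set (∀ n, X n) := fun K => {y | ∀ i, i < K → f i (y (i+1)) = y i} with hLkdef
  have hLk_closed : ∀ K, IsClosed (Lk K) := by
    intro K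
    have : Lk K = ⋂ i, ⋂ (_ : i < K), {y : ∀ n, X n | f i (y (i+1)) = y i} := by
      ext y; simp [hLkdef]
    rw [this]
    exact isClosed_iInter fun i => isClosed_iInter fun _ =>
      isClosed_eq ((hf i).comp (continuous_apply (i+1))) (continuous_apply i)
  have hLk_anti : ∀ j k, j ≤ k → Lk k ⊆ Lk j :=
    fun j k hjk y hy i hi => hy i (lt_of_lt_of_le hi hjk)
  have hS_eq : S = ⋂ k, Lk k := by
    ext y
    simp only [hSdef, hLkdef, mem_setOf_eq, mem_iInter]
    exact ⟨fun h k i _ => h i, fun h i => h (i+1) i (by omega)⟩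
  have hS_closed : IsClosed S := hS_eq ▸ isClosed_iInter fun k => hLk_closed k
  -- connectedness of the partial-thread sets
  have hpsi_mem : ∀ K y, auxPsi f K y ∈ Lk K := by
    intro K y i hi
    exact auxPsi_compat f K y i hi
  have hLk_eq : ∀ K, Lk K = auxPsi f K '' univ := by
    intro K
    apply Subset.antisymm
    · intro y hy
      exact ⟨y, mem_univ y, auxPsi_eq_self f K y hy⟩
    · rintro _ ⟨y, -, rfl⟩
      exact hpsi_mem K y
  have hLk_conn : ∀ K, IsConnected (Lk K) := by
    intro K
    rw [hLk_eq K]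
    exact isConnected_univ.image _ (auxPsi_continuous f hf K).continuousOn
  have hLk_compact : ∀ K, IsCompact (Lk K) := fun K => (hLk_closed K).isCompact
  -- connectedness of S
  have hS_conn : IsConnected S := by
    rw [hS_eq]
    exact aux_isConnected_iInter Lk hLk_compact hLk_conn
      (fun k => hLk_anti k (k+1) (by omega))
  -- fibers of the iterated bonding maps are connected
  have hdown_fib : ∀ m k (a : X m), IsConnected (auxDown f m k ⁻¹' {a}) := by
    intro m k
    induction k with
    | zero =>
      intro a
      have : auxDown f m 0 ⁻¹' {a} = {a} := rfl
      rw [this]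
      exact isConnected_singleton
    | succ k ih =>
      intro a
      have hstep : auxDown f m (k+1) ⁻¹' {a} = f (m+k) ⁻¹' (auxDown f m k ⁻¹' {a}) := rfl
      rw [hstep]
      constructor
      · obtain ⟨x, hx⟩ := (ih a).nonempty
        obtain ⟨z, hz⟩ := hsurj (m+k) x
        refine ⟨z, mem_preimage.mpr ?_⟩
        show auxDown f m k (f (m+k) z) ∈ ({a} : Set (X m))
        rw [hz]
        exact mem_preimage.mp hx
      · exact aux_preimage_preconnected ((hf (m+k)).isClosedMap) (ih a).isPreconnected
          (fun b _ => (hfib (m+k) b).isPreconnected)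
          (fun b _ => (hsurj (m+k) b).imp fun z hz => mem_preimage.mpr (by rw [hz]; rfl))
  -- cylinders over connected sets are connected
  have harb : ∀ m, X m := fun m => Classical.choice inferInstance
  have hcyl_conn : ∀ (K : ℕ) (T : Set (X K)), IsConnected T →
      IsConnected ((fun y : ∀ n, X n => y K) ⁻¹' T) := by
    intro K T hT
    have hfibcyl : ∀ b : X K, (fun y : ∀ n, X n => y K) ⁻¹' {b} =
        (fun y : ∀ n, X n => Function.update y K b) '' univ := by
      intro b
      apply Subset.antisymm
      · intro z hz
        have hzb : z K = b := hz
        refine ⟨z, mem_univ z, ?_⟩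
        show Function.update z K b = z
        rw [← hzb]
        exact Function.update_eq_self K z
      · rintro _ ⟨y, -, rfl⟩
        exact Function.update_self K b y
    constructor
    · obtain ⟨b, hb⟩ := hT.nonempty
      exact ⟨Function.update harb K b, show Function.update harb K b K ∈ T by
        rw [Function.update_self]; exact hb⟩
    · apply aux_preimage_preconnected ((continuous_apply K).isClosedMap) hT.isPreconnected
      · intro b _
        rw [hfibcyl b]
        exact isPreconnected_univ.image _ (continuous_id.update K continuous_const).continuousOn
      · intro b _
        exact ⟨Function.update harb K b, Function.update_self K b harb⟩
  -- the big fibers are connected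
  have hbigfiber : ∀ (n : ℕ) (a : X n), IsConnected (S ∩ {y | y n = a}) := by
    intro n a
    set Fk : ℕ → Set (∀ m, X m) := fun k => Lk (n + k) ∩ {y | y n = a} with hFkdef
    have hFk_eq : ∀ k, Fk k =
        auxPsi f (n+k) '' ((fun y : ∀ m, X m => y (n+k)) ⁻¹' (auxDown f n k ⁻¹' {a})) := by
      intro k
      apply Subset.antisymm
      · rintro z ⟨hz1, hz2⟩
        refine ⟨z, ?_, auxPsi_eq_self f (n+k) z hz1⟩
        show auxDown f n k (z (n + k)) ∈ ({a} : Set (X n))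
        have := auxDown_thread f z n k (fun i hi => hz1 i hi)
        rw [this]
        exact hz2
      · rintro _ ⟨y, hy, rfl⟩
        refine ⟨hpsi_mem (n+k) y, ?_⟩
        show auxPsi f (n+k) y n = a
        by_cases h : n < n + k
        · simp only [auxPsi, dif_pos h]
          rw [show n + k - n = k by omega]
          exact hy
        · have hk0 : k = 0 := by omega
          subst hk0
          simp only [auxPsi, dif_neg h]
          exact hy
    have hFk_conn : ∀ k, IsConnected (Fk k) := by
      intro k
      rw [hFk_eq k]
      exact (hcyl_conn (n+k) _ (hdown_fib n k a)).image _
        (auxPsi_continuous f hf (n+k)).continuousOn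
    have hFk_closed : ∀ k, IsClosed (Fk k) :=
      fun k => (hLk_closed (n+k)).inter (isClosed_eq (continuous_apply n) continuous_const)
    have hFk_compact : ∀ k, IsCompact (Fk k) := fun k => (hFk_closed k).isCompact
    have hFk_anti : ∀ k, Fk (k+1) ⊆ Fk k :=
      fun k => inter_subset_inter_left _ (hLk_anti (n+k) (n+(k+1)) (by omega))
    have hinter : S ∩ {y | y n = a} = ⋂ k, Fk k := by
      ext y
      simp only [hFkdef, hSdef, hLkdef, mem_inter_iff, mem_setOf_eq, mem_iInter]
      constructor
      · exact fun ⟨h1, h2⟩ k => ⟨fun i _ => h1 i, h2⟩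
      · intro h
        exact ⟨fun i => (h (i+1)).1 i (by omega), (h 0).2⟩
    rw [hinter]
    exact aux_isConnected_iInter Fk hFk_compact hFk_conn hFk_anti
  -- now the four conclusions
  have hCompact : CompactSpace {x : ∀ n, X n // ∀ n, f n (x (n+1)) = x n} :=
    isCompact_iff_compactSpace.mp hS_closed.isCompact
  have hConnected : ConnectedSpace {x : ∀ n, X n // ∀ n, f n (x (n+1)) = x n} :=
    Subtype.connectedSpace hS_conn
  have hMetriz' : TopologicalSpace.MetrizableSpace ↥S := inferInstance
  have hMetriz : TopologicalSpace.MetrizableSpace {x : ∀ n, X n // ∀ n, f n (x (n+1)) = x n} :=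
    hMetriz'
  refine ⟨hConnected, ?_, hCompact, hMetriz⟩
  -- local connectedness
  rw [locallyConnectedSpace_iff_subsets_isOpen_isConnected]
  intro x U hU
  obtain ⟨W, hW, hWU⟩ := (mem_nhds_subtype S x U).mp hU
  obtain ⟨O, hOW, hO, hxO⟩ := mem_nhds_iff.mp hW
  obtain ⟨I, u, h1, h2⟩ := isOpen_pi_iff.mp hO x.val hxO
  set n : ℕ := I.sup id with hn
  have hmem_le : ∀ m ∈ I, m ≤ n := fun m hm => Finset.le_sup (f := id) hm
  -- downward maps from coordinate n
  have hcast_cont : ∀ {i j : ℕ} (e : i = j) (h : X i = X j),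
      Continuous (cast h : X i → X j) := by
    intro i j e h
    subst e
    exact continuous_id
  set dLE : ∀ m, m ≤ n → X n → X m := fun m h b =>
    auxDown f m (n - m) (cast (congrArg X (Nat.add_sub_cancel' h).symm) b) with hdLEdef
  have hdLE_cont : ∀ m (h : m ≤ n), Continuous (dLE m h) := by
    intro m h
    exact (auxDown_continuous f hf m (n - m)).comp
      (hcast_cont (Nat.add_sub_cancel' h).symm _)
  have hdLE_thread : ∀ (y : ∀ m, X m), y ∈ S → ∀ m (h : m ≤ n), dLE m h (y n) = y m := by
    intro y hy m h
    simp only [hdLEdef]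
    rw [aux_apply_cast y (Nat.add_sub_cancel' h).symm]
    exact auxDown_thread f y m (n - m) (fun i _ => hy i)
  set Vm : ℕ → Set (X n) := fun m =>
    if h : m ≤ n then dLE m h ⁻¹' (u m) else univ with hVmdef
  set V : Set (X n) := ⋂ m ∈ I, Vm m with hVdef
  have hVopen : IsOpen V := by
    apply isOpen_biInter_finset
    intro m hm
    simp only [hVmdef, dif_pos (hmem_le m hm)]
    exact (h1 m hm).1.preimage (hdLE_cont m (hmem_le m hm))
  have hxV : x.val n ∈ V := by
    apply mem_iInter₂.mpr
    intro m hm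
    simp only [hVmdef, dif_pos (hmem_le m hm)]
    rw [mem_preimage, hdLE_thread x.val x.2 m (hmem_le m hm)]
    exact (h1 m hm).2
  obtain ⟨V₀, hV₀V, hV₀open, hxV₀, hV₀conn⟩ :=
    locallyConnectedSpace_iff_subsets_isOpen_isConnected.mp inferInstance (x.val n) V
      (hVopen.mem_nhds hxV)
  set pn : {x : ∀ n, X n // ∀ n, f n (x (n+1)) = x n} → X n := fun y => y.val n with hpndef
  have hpn_cont : Continuous pn := (continuous_apply n).comp continuous_subtype_val
  refine ⟨pn ⁻¹' V₀, ?_, hV₀open.preimage hpn_cont, hxV₀, ?_⟩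
  · -- inclusion into U
    intro y hy
    have hyV : y.val n ∈ V := hV₀V hy
    have h3 : ∀ m ∈ I, y.val m ∈ u m := by
      intro m hm
      have hthis := mem_iInter₂.mp hyV m hm
      simp only [hVmdef, dif_pos (hmem_le m hm)] at hthis
      rw [mem_preimage, hdLE_thread y.val y.2 m (hmem_le m hm)] at hthis
      exact hthis
    have : y.val ∈ (I : Set ℕ).pi u := fun m hm => h3 m hm
    exact hWU (hOW (h2 this))
  · -- connectedness
    refine ⟨⟨x, hxV₀⟩, ?_⟩
    have hT2 : T2Space (X n) := inferInstance
    have hclosedmap : IsClosedMap pn := hpn_cont.isClosedMap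
    apply aux_preimage_preconnected hclosedmap hV₀conn.isPreconnected
    · intro b _
      have himg : Subtype.val '' (pn ⁻¹' {b}) = S ∩ {y | y n = b} := by
        ext z
        constructor
        · rintro ⟨w, hw, rfl⟩
          exact ⟨w.2, hw⟩
        · rintro ⟨hz1, hz2⟩
          exact ⟨⟨z, hz1⟩, hz2, rfl⟩
      have := (hbigfiber n b).isPreconnected
      rw [← himg] at this
      exact (IsInducing.subtypeVal.isPreconnected_image).mp this
    · intro b _
      obtain ⟨y0, hy0⟩ := (hbigfiber n b).nonempty
      exact ⟨⟨y0, hy0.1⟩, hy0.2⟩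
end

section
/- Let P = (P_i, π_i) be an inverse sequence of compact metric spaces, and for each i let Q_i be an upper semicontinuous partition of P_i such that: (p1) for each i and each Q ∈ Q_{i+1} there is Q' ∈ Q_i with π_i(Q) ⊆ Q'; and (p2) for any sequence (Q_i)_{i≥k} with Q_i ∈ Q_i and π_i(Q_{i+1}) ⊆ Q_i for all i ≥ k, the diameters of the images π_{i,k}(Q_i) converge to 0. Then the induced inverse sequence of quotient spaces P* = (P_i/Q_i, π*_i) is well-defined with continuous bonding maps, and lim← P* is homeomorphic to lim← P. -/
/-- The composition `π_{k+d,k} = π_k ∘ ⋯ ∘ π_{k+d-1}` of the bonding maps of an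
inverse sequence. -/
def bondAux {P : ℕ → Type} (π : ∀ n, P (n+1) → P n) (k : ℕ) : ∀ d : ℕ, P (k + d) → P k
  | 0 => id
  | d+1 => fun x => bondAux π k d (π (k + d) x)

lemma bondAux_continuous {P : ℕ → Type} [∀ i, TopologicalSpace (P i)]
    (π : ∀ n, P (n+1) → P n) (hπ : ∀ i, Continuous (π i)) (k : ℕ) :
    ∀ d : ℕ, Continuous (bondAux π k d)
  | 0 => continuous_id
  | d+1 => (bondAux_continuous π hπ k d).comp (hπ (k + d))

lemma bondAux_thread {P : ℕ → Type} (π : ∀ n, P (n+1) → P n)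
    (x : ∀ i, P i) (hx : ∀ i, π i (x (i+1)) = x i) (k : ℕ) :
    ∀ d : ℕ, bondAux π k d (x (k + d)) = x k
  | 0 => rfl
  | d+1 => by
      show bondAux π k d (π (k + d) (x (k + d + 1))) = x k
      rw [hx (k + d)]
      exact bondAux_thread π x hx k d

/-- Good quotients of inverse sequences (Lemma 5.6): given upper semicontinuous
partitions (encoded as equivalence relations `S i` with closed classes and closed
quotient maps) of the spaces of an inverse sequence of compact metric spaces,
satisfying compatibility (p1) and fineness (p2), the induced inverse sequence of
quotients is well defined, has continuous bonding maps, and its inverse limit is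
homeomorphic to that of the original sequence. -/
theorem stmt7 (P : ℕ → Type) [∀ i, MetricSpace (P i)] [∀ i, CompactSpace (P i)]
    (π : ∀ i, P (i+1) → P i) (hπ : ∀ i, Continuous (π i))
    (S : ∀ i, P i → P i → Prop) (hEq : ∀ i, Equivalence (S i))
    (hcl : ∀ i (x : P i), IsClosed {y | S i x y})
    (husc : ∀ i, IsClosedMap (Quot.mk (S i)))
    (h1 : ∀ i x y, S (i+1) x y → S i (π i x) (π i y))
    (h2 : ∀ (k : ℕ) (x : ∀ i, P i),
      (∀ d : ℕ, S (k+d) (π (k+d) (x (k+d+1))) (x (k+d))) →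
      ∀ ε > 0, ∃ N, ∀ d ≥ N,
        Metric.diam (bondAux π k d '' {y | S (k+d) (x (k+d)) y}) < ε) :
    ∃ π' : ∀ i, Quot (S (i+1)) → Quot (S i),
      (∀ i, Continuous (π' i)) ∧
      (∀ i x, π' i (Quot.mk (S (i+1)) x) = Quot.mk (S i) (π i x)) ∧
      Nonempty ({x : ∀ i, P i // ∀ i, π i (x (i+1)) = x i} ≃ₜ
                {y : ∀ i, Quot (S i) // ∀ i, π' i (y (i+1)) = y i}) := by
  classical
  -- basic facts about the quotients
  have hmk : ∀ i (a b : P i), Quot.mk (S i) a = Quot.mk (S i) b ↔ S i a b := by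
    intro i a b
    constructor
    · intro h
      exact (hEq i).eqvGen_iff.mp (Quot.eqvGen_exact h)
    · exact Quot.sound
  -- the induced bonding maps
  refine ⟨fun i => Quot.map (π i) (h1 i), ?_, ?_, ?_⟩
  · -- continuity
    intro i
    refine isQuotientMap_quot_mk.continuous_iff.mpr ?_
    exact (continuous_quot_mk).comp (hπ i)
  · intro i x; rfl
  -- the homeomorphism of inverse limits
  -- Hausdorffness of the quotients
  have hT2 : ∀ i, T2Space (Quot (S i)) := by
    intro i
    constructor
    intro a b hab
    obtain ⟨x, rfl⟩ := Quot.exists_rep a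
    obtain ⟨y, rfl⟩ := Quot.exists_rep b
    have hdisj : Disjoint {z | S i x z} {z | S i y z} := by
      rw [Set.disjoint_left]
      intro z hz hz'
      exact hab ((hmk i x y).mpr ((hEq i).trans hz ((hEq i).symm hz')))
    obtain ⟨U, V, hU, hV, hxU, hyV, hUV⟩ :=
      normal_separation (hcl i x) (hcl i y) hdisj
    refine ⟨(Quot.mk (S i) '' Uᶜ)ᶜ, (Quot.mk (S i) '' Vᶜ)ᶜ, ?_, ?_, ?_, ?_, ?_⟩
    · exact (husc i _ hU.isClosed_compl).isOpen_compl
    · exact (husc i _ hV.isClosed_compl).isOpen_compl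
    · intro hmem
      obtain ⟨z, hz, hz'⟩ := hmem
      exact hz (hxU ((hEq i).symm ((hmk i z x).mp hz')))
    · intro hmem
      obtain ⟨z, hz, hz'⟩ := hmem
      exact hz (hyV ((hEq i).symm ((hmk i z y).mp hz')))
    · rw [Set.disjoint_left]
      rintro c hc hc'
      obtain ⟨z, rfl⟩ := Quot.exists_rep c
      have hzU : z ∈ U := by
        by_contra h
        exact hc ⟨z, h, rfl⟩
      have hzV : z ∈ V := by
        by_contra h
        exact hc' ⟨z, h, rfl⟩
      exact Set.disjoint_left.mp hUV hzU hzV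
  haveI := hT2
  -- compactness of the inverse limit
  have hclosedLim : IsClosed {x : ∀ i, P i | ∀ i, π i (x (i+1)) = x i} := by
    have : {x : ∀ i, P i | ∀ i, π i (x (i+1)) = x i} =
        ⋂ i, {x : ∀ i, P i | π i (x (i+1)) = x i} := by
      ext x; simp [Set.mem_iInter]
    rw [this]
    exact isClosed_iInter fun i =>
      isClosed_eq ((hπ i).comp (continuous_apply _)) (continuous_apply _)
  haveI : CompactSpace {x : ∀ i, P i // ∀ i, π i (x (i+1)) = x i} :=
    isCompact_iff_compactSpace.mp hclosedLim.isCompact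
  -- the natural map between the limits
  set π' : ∀ i, Quot (S (i+1)) → Quot (S i) := fun i => Quot.map (π i) (h1 i) with hπ'
  let Φ : {x : ∀ i, P i // ∀ i, π i (x (i+1)) = x i} →
      {y : ∀ i, Quot (S i) // ∀ i, π' i (y (i+1)) = y i} :=
    fun x => ⟨fun i => Quot.mk (S i) (x.1 i), fun i => by
      show Quot.mk (S i) (π i (x.1 (i+1))) = Quot.mk (S i) (x.1 i)
      rw [x.2 i]⟩
  have hΦcont : Continuous Φ := by
    refine Continuous.subtype_mk (continuous_pi fun i => ?_) _
    exact continuous_quot_mk.comp ((continuous_apply i).comp continuous_subtype_val)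
  -- injectivity
  have hinj : Function.Injective Φ := by
    intro x y hxy
    have hS : ∀ i, S i (x.1 i) (y.1 i) := by
      intro i
      have := congrFun (congrArg Subtype.val hxy) i
      exact (hmk i _ _).mp this
    refine Subtype.ext (funext fun k => ?_)
    refine eq_of_forall_dist_le fun ε hε => ?_
    have hx2 : ∀ d : ℕ, S (k+d) (π (k+d) (x.1 (k+d+1))) (x.1 (k+d)) := by
      intro d
      rw [x.2 (k+d)]
      exact (hEq (k+d)).refl _
    obtain ⟨N, hN⟩ := h2 k x.1 hx2 ε hε
    have hdiam := hN N le_rfl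
    have hKcompact : IsCompact {z | S (k+N) (x.1 (k+N)) z} :=
      (hcl (k+N) (x.1 (k+N))).isCompact
    have hb : Bornology.IsBounded (bondAux π k N '' {z | S (k+N) (x.1 (k+N)) z}) :=
      (hKcompact.image (bondAux_continuous π hπ k N)).isBounded
    have hmx : x.1 k ∈ bondAux π k N '' {z | S (k+N) (x.1 (k+N)) z} :=
      ⟨x.1 (k+N), (hEq (k+N)).refl _, bondAux_thread π x.1 x.2 k N⟩
    have hmy : y.1 k ∈ bondAux π k N '' {z | S (k+N) (x.1 (k+N)) z} :=
      ⟨y.1 (k+N), hS (k+N), bondAux_thread π y.1 y.2 k N⟩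
    exact le_of_lt (lt_of_le_of_lt (Metric.dist_le_diam_of_mem hb hmx hmy) hdiam)
  -- surjectivity
  have hsurj : Function.Surjective Φ := by
    intro y
    -- choose representatives
    choose q hq using fun i => Quot.exists_rep (y.1 i)
    have hqS : ∀ i, S i (π i (q (i+1))) (q i) := by
      intro i
      apply (hmk i _ _).mp
      have := y.2 i
      rw [← hq (i+1), ← hq i] at this
      exact this
    -- the "pull down" operator
    set F : (∀ i, P i) → (∀ i, P i) := fun z i => π i (z (i+1)) with hF
    have hFd : ∀ d i, S i (q i) ((F^[d] q) i) := by
      intro d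
      induction d with
      | zero => intro i; exact (hEq i).refl _
      | succ d ih =>
        intro i
        rw [Function.iterate_succ_apply']
        show S i (q i) (π i ((F^[d] q) (i+1)))
        exact (hEq i).trans ((hEq i).symm (hqS i)) (h1 i _ _ (ih (i+1)))
    -- the nested compact sets
    set T : ℕ → Set (∀ i, P i) := fun n =>
      {x | (∀ i < n, π i (x (i+1)) = x i) ∧ ∀ i, S i (q i) (x i)} with hT
    have hTclosed : ∀ n, IsClosed (T n) := by
      intro n
      have hA : IsClosed {x : ∀ i, P i | ∀ i < n, π i (x (i+1)) = x i} := by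
        have : {x : ∀ i, P i | ∀ i < n, π i (x (i+1)) = x i} =
            ⋂ i, ⋂ (_ : i < n), {x : ∀ i, P i | π i (x (i+1)) = x i} := by
          ext x; simp
        rw [this]
        exact isClosed_iInter fun i => isClosed_iInter fun _ =>
          isClosed_eq ((hπ i).comp (continuous_apply _)) (continuous_apply _)
      have hB : IsClosed {x : ∀ i, P i | ∀ i, S i (q i) (x i)} := by
        have : {x : ∀ i, P i | ∀ i, S i (q i) (x i)} =
            ⋂ i, (fun x : ∀ j, P j => x i) ⁻¹' {z | S i (q i) z} := by
          ext x; simp [Set.mem_iInter]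
        rw [this]
        exact isClosed_iInter fun i => (hcl i (q i)).preimage (continuous_apply i)
      exact hA.inter hB
    have hTsub : ∀ n, T (n+1) ⊆ T n := by
      intro n x hx
      exact ⟨fun i hi => hx.1 i (Nat.lt_succ_of_lt hi), hx.2⟩
    have hTne : ∀ n, (T n).Nonempty := by
      intro n
      refine ⟨fun i => (F^[n - i] q) i, ?_, fun i => hFd (n - i) i⟩
      intro i hi
      show π i ((F^[n - (i+1)] q) (i+1)) = (F^[n - i] q) i
      have hstep : n - i = (n - (i+1)) + 1 := by omega
      rw [hstep, Function.iterate_succ_apply']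
    have hInter : (⋂ n, T n).Nonempty :=
      IsCompact.nonempty_iInter_of_sequence_nonempty_isCompact_isClosed T hTsub hTne
        ((hTclosed 0).isCompact) hTclosed
    obtain ⟨x, hx⟩ := hInter
    have hxT : ∀ n, x ∈ T n := fun n => Set.mem_iInter.mp hx n
    have hthread : ∀ i, π i (x (i+1)) = x i := fun i =>
      (hxT (i+1)).1 i (Nat.lt_succ_self i)
    refine ⟨⟨x, hthread⟩, ?_⟩
    refine Subtype.ext (funext fun i => ?_)
    show Quot.mk (S i) (x i) = y.1 i
    rw [← hq i]
    exact (hmk i _ _).mpr ((hEq i).symm ((hxT 0).2 i))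
  -- conclude
  let e : {x : ∀ i, P i // ∀ i, π i (x (i+1)) = x i} ≃
      {y : ∀ i, Quot (S i) // ∀ i, π' i (y (i+1)) = y i} :=
    Equiv.ofBijective Φ ⟨hinj, hsurj⟩
  exact ⟨hΦcont.homeoOfEquivCompactToT2 (f := e)⟩
end

section
/- Let X be a complete CAT(0) space, x₀ ∈ X, and let A, A' ⊆ X be compact sets with A ⊆ A'. Suppose D is a closed bounded subset of X containing x₀ such that for every x ∈ D \ {x₀}, the geodesic segment [x₀, x] lies in D and [x₀, x) lies in the interior of D (a strict star domain). Then for every point y ∈ X \ int(D), the geodesic segment [x₀, y] intersects the boundary ∂D in exactly one point. -/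
/-- A uniquely geodesic metric space with convex metric (the relevant structure of a
CAT(0) space): `γ x y` is the affinely parametrized geodesic from `x` to `y` on `[0,1]`,
it is the unique such path, and the distance between points with the same parameter on
two geodesics issuing from a common point is a convex function of the parameter. -/
structure GeodesicCAT0 (X : Type*) [MetricSpace X] where
  γ : X → X → ℝ → X
  γ_zero : ∀ x y, γ x y 0 = x
  γ_one : ∀ x y, γ x y 1 = y
  γ_dist : ∀ x y, ∀ s ∈ Set.Icc (0:ℝ) 1, ∀ t ∈ Set.Icc (0:ℝ) 1,
    dist (γ x y s) (γ x y t) = |s - t| * dist x y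
  unique : ∀ x y (c : ℝ → X), c 0 = x → c 1 = y →
    (∀ s ∈ Set.Icc (0:ℝ) 1, ∀ t ∈ Set.Icc (0:ℝ) 1,
      dist (c s) (c t) = |s - t| * dist x y) →
    ∀ t ∈ Set.Icc (0:ℝ) 1, c t = γ x y t
  convex : ∀ x y y', ∀ t ∈ Set.Icc (0:ℝ) 1, dist (γ x y t) (γ x y' t) ≤ t * dist y y'

/-- A strict star domain in `(X, x₀)`: a closed bounded subset `D` containing `x₀`,
distinct from `{x₀}`, such that for every `x ∈ D \ {x₀}` the geodesic segment `[x₀,x]`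
lies in `D` and the half-open segment `[x₀,x)` lies in the interior of `D`. -/
def IsStrictStar {X : Type*} [MetricSpace X] (g : GeodesicCAT0 X) (x₀ : X)
    (D : Set X) : Prop :=
  IsClosed D ∧ Bornology.IsBounded D ∧ x₀ ∈ D ∧ D ≠ {x₀} ∧
  ∀ x ∈ D, x ≠ x₀ →
    g.γ x₀ x '' Set.Icc (0:ℝ) 1 ⊆ D ∧ g.γ x₀ x '' Set.Ico (0:ℝ) 1 ⊆ interior D

/-- Fact 7.2: for a strict star domain `D` in a complete CAT(0) space and a point `y`
outside the interior of `D`, the geodesic segment `[x₀, y]` meets the boundary `∂D`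
in exactly one point. -/
theorem stmt10 {X : Type*} [MetricSpace X] [CompleteSpace X] (g : GeodesicCAT0 X)
    (x₀ : X) (A A' : Set X) (hA : IsCompact A) (hA' : IsCompact A') (hAA' : A ⊆ A')
    (D : Set X) (hD : IsStrictStar g x₀ D)
    (y : X) (hy : y ∉ interior D) :
    ∃! p, p ∈ g.γ x₀ y '' Set.Icc (0:ℝ) 1 ∧ p ∈ frontier D := by
  obtain ⟨hDcl, hDbdd, hx₀D, hDne, hstar⟩ := hD
  -- x₀ lies in the interior of D
  obtain ⟨x, hxD, hxne⟩ : ∃ x ∈ D, x ≠ x₀ := by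
    by_contra h
    push_neg at h
    exact hDne (Set.eq_singleton_iff_unique_mem.mpr ⟨hx₀D, h⟩)
  have hx₀int : x₀ ∈ interior D := by
    have h := (hstar x hxD hxne).2 ⟨0, ⟨le_refl 0, zero_lt_one⟩, rfl⟩
    rwa [g.γ_zero] at h
  have hyne : y ≠ x₀ := by rintro rfl; exact hy hx₀int
  set c : ℝ → X := g.γ x₀ y with hc
  have hc0 : c 0 = x₀ := g.γ_zero x₀ y
  have hc1 : c 1 = y := g.γ_one x₀ y
  set d : ℝ := dist x₀ y with hdd
  have hd : 0 < d := dist_pos.mpr (fun h => hyne h.symm)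
  have hcd : ∀ s ∈ Set.Icc (0:ℝ) 1, ∀ t ∈ Set.Icc (0:ℝ) 1,
      dist (c s) (c t) = |s - t| * d := g.γ_dist x₀ y
  set S : Set ℝ := {t : ℝ | t ∈ Set.Icc (0:ℝ) 1 ∧ c t ∈ D} with hS
  have hS0 : (0:ℝ) ∈ S := ⟨⟨le_refl 0, zero_le_one⟩, by rw [hc0]; exact hx₀D⟩
  have hSne : S.Nonempty := ⟨0, hS0⟩
  have hSbdd : BddAbove S := ⟨1, fun t ht => ht.1.2⟩
  set T : ℝ := sSup S with hT
  have hT0 : 0 ≤ T := le_csSup hSbdd hS0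
  have hT1 : T ≤ 1 := csSup_le hSne (fun t ht => ht.1.2)
  have hTIcc : T ∈ Set.Icc (0:ℝ) 1 := ⟨hT0, hT1⟩
  -- c T ∈ D
  have hcTD : c T ∈ D := by
    rw [← hDcl.closure_eq, Metric.mem_closure_iff]
    intro ε hε
    obtain ⟨t, htS, htlt⟩ := exists_lt_of_lt_csSup hSne
      (show T - ε / d < T by
        have : 0 < ε / d := div_pos hε hd
        linarith)
    refine ⟨c t, htS.2, ?_⟩
    have htT : t ≤ T := le_csSup hSbdd htS
    rw [hcd T hTIcc t htS.1, abs_of_nonneg (by linarith)]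
    have h1 : T - t < ε / d := by linarith
    calc (T - t) * d < (ε / d) * d := by
          exact mul_lt_mul_of_pos_right h1 hd
      _ = ε := div_mul_cancel₀ ε (ne_of_gt hd)
  -- c T is not in the interior of D
  have hcTni : c T ∉ interior D := by
    intro hint
    have hT1' : T < 1 := by
      rcases lt_or_eq_of_le hT1 with h | h
      · exact h
      · exfalso; rw [h] at hint; rw [hc1] at hint; exact hy hint
    obtain ⟨ε, hε, hball⟩ := Metric.isOpen_iff.mp isOpen_interior _ hint
    have hδ : 0 < ε / (2 * d) := div_pos hε (by linarith)
    set t : ℝ := min 1 (T + ε / (2 * d)) with ht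
    have htT : T < t := lt_min hT1' (by linarith)
    have htIcc : t ∈ Set.Icc (0:ℝ) 1 := ⟨by linarith, min_le_left _ _⟩
    have hdist : dist (c t) (c T) < ε := by
      rw [hcd t htIcc T hTIcc, abs_of_nonneg (by linarith)]
      have h1 : t - T ≤ ε / (2 * d) := by
        have := min_le_right 1 (T + ε / (2 * d))
        linarith
      calc (t - T) * d ≤ (ε / (2 * d)) * d :=
            mul_le_mul_of_nonneg_right h1 hd.le
        _ = ε / 2 := by field_simp
        _ < ε := by linarith
    have : c t ∈ D := interior_subset (hball hdist)
    have : t ∈ S := ⟨htIcc, this⟩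
    exact absurd (le_csSup hSbdd this) (not_le.mpr htT)
  have hcTne : c T ≠ x₀ := fun h => hcTni (h ▸ hx₀int)
  have hfr : frontier D = D \ interior D := hDcl.frontier_eq
  -- key: any frontier parameter must equal T
  have hkey : ∀ s ∈ Set.Icc (0:ℝ) 1, c s ∈ frontier D → s = T := by
    intro s hsIcc hsfr
    rw [hfr] at hsfr
    have hsS : s ∈ S := ⟨hsIcc, hsfr.1⟩
    have hsT : s ≤ T := le_csSup hSbdd hsS
    rcases lt_or_eq_of_le hsT with hlt | heq
    · exfalso
      have hTpos : 0 < T := lt_of_le_of_lt hsIcc.1 hlt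
      -- reparametrize: u ↦ c (T * u) is the geodesic from x₀ to c T
      have hTd : dist x₀ (c T) = T * d := by
        rw [← hc0, hcd 0 ⟨le_refl 0, zero_le_one⟩ T hTIcc]
        rw [abs_of_nonpos (by linarith)]
        ring
      have huniq : ∀ u ∈ Set.Icc (0:ℝ) 1, c (T * u) = g.γ x₀ (c T) u := by
        apply g.unique x₀ (c T) (fun u => c (T * u))
        · simp [mul_zero, hc0]
        · simp [mul_one]
        · intro u hu v hv
          have hu' : T * u ∈ Set.Icc (0:ℝ) 1 :=
            ⟨mul_nonneg hT0 hu.1, le_trans (mul_le_of_le_one_right hT0 hu.2) hT1⟩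
          have hv' : T * v ∈ Set.Icc (0:ℝ) 1 :=
            ⟨mul_nonneg hT0 hv.1, le_trans (mul_le_of_le_one_right hT0 hv.2) hT1⟩
          rw [hcd _ hu' _ hv', hTd, ← mul_sub, abs_mul, abs_of_nonneg hT0]
          ring
      have hstarT := (hstar (c T) hcTD hcTne).2
      have hsu : s / T ∈ Set.Ico (0:ℝ) 1 :=
        ⟨div_nonneg hsIcc.1 hT0, (div_lt_one hTpos).mpr hlt⟩
      have : c s ∈ interior D := by
        have h1 : c (T * (s / T)) = g.γ x₀ (c T) (s / T) :=
          huniq (s / T) ⟨hsu.1, hsu.2.le⟩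
        rw [mul_div_cancel₀ s (ne_of_gt hTpos)] at h1
        rw [h1]
        exact hstarT ⟨s / T, hsu, rfl⟩
      exact hsfr.2 this
    · exact heq
  refine ⟨c T, ⟨⟨T, hTIcc, rfl⟩, by rw [hfr]; exact ⟨hcTD, hcTni⟩⟩, ?_⟩
  rintro p ⟨⟨s, hsIcc, rfl⟩, hpfr⟩
  rw [hkey s hsIcc hpfr]
end

section
/- Let X be a complete CAT(0) space with basepoint x₀, and let D ⊆ D' be two strict star domains in (X, x₀) (closed bounded sets, distinct from {x₀}, such that for each point x in the set other than x₀ the geodesic [x₀,x] is contained in the set and [x₀,x) in its interior). Assume ∂D and ∂D' are compact. Then the geodesic projection g : ∂D' → ∂D, which sends x' ∈ ∂D' to the unique point of ∂D on the geodesic [x₀, x'], is continuous. -/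
open Set Filter Topology


lemma star_interior {X : Type*} [MetricSpace X] {g : GeodesicCAT0 X} {x₀ : X}
    {D : Set X} (hD : IsStrictStar g x₀ D) : x₀ ∈ interior D := by
  obtain ⟨hcl, -, hx0, hne, hstar⟩ := hD
  obtain ⟨x₁, hx₁, hx₁ne⟩ : ∃ x₁ ∈ D, x₁ ≠ x₀ := by
    by_contra h
    push_neg at h
    exact hne (Subset.antisymm (fun x hx => h x hx) (by simpa using hx0))
  exact (hstar x₁ hx₁ hx₁ne).2 ⟨0, ⟨le_refl _, zero_lt_one⟩, g.γ_zero _ _⟩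

/-- reparametrization + strictness: points strictly before a point of `D` on a geodesic
are in the interior. -/
lemma star_strict {X : Type*} [MetricSpace X] {g : GeodesicCAT0 X} {x₀ : X}
    {D : Set X} (hD : IsStrictStar g x₀ D) (x : X) {s t : ℝ}
    (hs : 0 ≤ s) (hst : s < t) (ht : t ≤ 1) (hp : g.γ x₀ x t ∈ D)
    (hpne : g.γ x₀ x t ≠ x₀) : g.γ x₀ x s ∈ interior D := by
  set p := g.γ x₀ x t with hpdef
  have ht0 : 0 < t := lt_of_le_of_lt hs hst
  have hmem : ∀ u ∈ Icc (0:ℝ) 1, u * t ∈ Icc (0:ℝ) 1 := fun u hu =>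
    ⟨mul_nonneg hu.1 ht0.le, by
      calc u * t ≤ 1 * 1 := mul_le_mul hu.2 ht ht0.le zero_le_one
      _ = 1 := one_mul 1⟩
  have hdistp : dist x₀ p = t * dist x₀ x := by
    have := g.γ_dist x₀ x 0 ⟨le_refl _, zero_le_one⟩ t ⟨ht0.le, ht⟩
    rw [g.γ_zero] at this
    rw [hpdef, this, abs_of_nonpos (by linarith), neg_sub, sub_zero]
  have hkey : ∀ u ∈ Icc (0:ℝ) 1, g.γ x₀ x (u * t) = g.γ x₀ p u := by
    refine g.unique x₀ p (fun u => g.γ x₀ x (u * t))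
      (by show g.γ x₀ x (0 * t) = x₀; rw [zero_mul, g.γ_zero])
      (by show g.γ x₀ x (1 * t) = p; rw [one_mul]) ?_
    intro u hu v hv
    rw [g.γ_dist x₀ x _ (hmem u hu) _ (hmem v hv), hdistp]
    rw [show u * t - v * t = (u - v) * t by ring, abs_mul, abs_of_nonneg ht0.le]
    ring
  have hst' : s / t ∈ Ico (0:ℝ) 1 := ⟨div_nonneg hs ht0.le, (div_lt_one ht0).2 hst⟩
  have : g.γ x₀ x s = g.γ x₀ p (s / t) := by
    have := hkey (s / t) ⟨hst'.1, hst'.2.le⟩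
    rwa [div_mul_cancel₀ _ ht0.ne'] at this
  rw [this]
  exact ((hD.2.2.2.2 p hp hpne).2) ⟨s / t, hst', rfl⟩

lemma star_uniq {X : Type*} [MetricSpace X] {g : GeodesicCAT0 X} {x₀ : X}
    {D : Set X} (hD : IsStrictStar g x₀ D) (x : X) {s t : ℝ}
    (hs : s ∈ Icc (0:ℝ) 1) (ht : t ∈ Icc (0:ℝ) 1)
    (hfs : g.γ x₀ x s ∈ frontier D) (hft : g.γ x₀ x t ∈ frontier D) : s = t := by
  have hint : x₀ ∈ interior D := star_interior hD
  have hdisj : ∀ y, y ∈ frontier D → y ∉ interior D := fun y hy => hy.2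
  have hDcl : frontier D ⊆ D := fun y hy => by
    have h := frontier_subset_closure (s := D) hy
    rwa [hD.1.closure_eq] at h
  have key : ∀ {a b : ℝ}, a ∈ Icc (0:ℝ) 1 → b ∈ Icc (0:ℝ) 1 →
      g.γ x₀ x a ∈ frontier D → g.γ x₀ x b ∈ frontier D → ¬ a < b := by
    intro a b ha hb hfa hfb hab
    have hbne : g.γ x₀ x b ≠ x₀ := by
      intro h
      apply hdisj _ hfb
      rw [h]; exact hint
    exact hdisj _ hfa (star_strict hD x ha.1 hab hb.2 (hDcl hfb) hbne)
  rcases lt_trichotomy s t with h | h | h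
  · exact absurd h (key hs ht hfs hft)
  · exact h
  · exact absurd h (key ht hs hft hfs)

/-- Lemma 7.4: for nested strict star domains `D ⊆ D'` in a complete CAT(0) space
with compact boundaries, the geodesic projection `∂D' → ∂D` (which sends `x'` to the
point of `∂D` on the geodesic `[x₀, x']`) is continuous. -/
theorem stmt11 {X : Type*} [MetricSpace X] [CompleteSpace X] (g : GeodesicCAT0 X)
    (x₀ : X) (D D' : Set X) (hD : IsStrictStar g x₀ D) (hD' : IsStrictStar g x₀ D')
    (hsub : D ⊆ D') (hbd : IsCompact (frontier D)) (hbd' : IsCompact (frontier D'))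
    (gproj : X → X)
    (hg : ∀ x' ∈ frontier D',
      gproj x' ∈ frontier D ∧ gproj x' ∈ g.γ x₀ x' '' Set.Icc (0:ℝ) 1) :
    ContinuousOn gproj (frontier D') := by
  rw [continuousOn_iff_continuous_restrict, continuous_iff_seqContinuous]
  intro u xh hu
  obtain ⟨x, hx⟩ := xh
  have hxne : x ≠ x₀ := by
    intro h
    have h2 : x₀ ∈ interior D' := interior_mono hsub (star_interior hD)
    exact hx.2 (h ▸ h2)
  have huX : Tendsto (fun n => ((u n : X))) atTop (𝓝 x) :=
    (continuous_subtype_val.tendsto _).comp hu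
  obtain ⟨t', ht', ht'eq⟩ := (hg x hx).2
  choose T hT hTeq using fun n => (hg (u n : X) (u n).2).2
  show Tendsto (fun n => gproj (u n : X)) atTop (𝓝 (gproj x))
  apply tendsto_of_subseq_tendsto
  intro ns hns
  obtain ⟨y, hy, φ, hφ, hyconv⟩ :=
    hbd.tendsto_subseq (x := fun n => gproj ((u (ns n) : X)))
      (fun n => (hg _ (u (ns n)).2).1)
  obtain ⟨tl, htl, ψ, hψ, htconv⟩ :=
    isCompact_Icc.tendsto_subseq (x := fun n => T (ns (φ n)))
      (fun n => hT (ns (φ n)))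
  refine ⟨fun n => φ (ψ n), ?_⟩
  have hyconv' : Tendsto (fun n => gproj (u (ns (φ (ψ n))) : X)) atTop (𝓝 y) :=
    hyconv.comp hψ.tendsto_atTop
  have humX : Tendsto (fun n => ((u (ns (φ (ψ n))) : X))) atTop (𝓝 x) :=
    huX.comp ((hns.comp hφ.tendsto_atTop).comp hψ.tendsto_atTop)
  have htconv' : Tendsto (fun n => T (ns (φ (ψ n)))) atTop (𝓝 tl) := htconv
  have hconv2 : Tendsto (fun n => gproj (u (ns (φ (ψ n))) : X)) atTop (𝓝 (g.γ x₀ x tl)) := by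
    rw [tendsto_iff_dist_tendsto_zero]
    have hbound : ∀ n, dist (gproj (u (ns (φ (ψ n))) : X)) (g.γ x₀ x tl) ≤
        dist ((u (ns (φ (ψ n))) : X)) x + |T (ns (φ (ψ n))) - tl| * dist x₀ x := by
      intro n
      set k := ns (φ (ψ n))
      have h1 : dist (gproj (u k : X)) (g.γ x₀ x (T k)) ≤ T k * dist ((u k : X)) x := by
        rw [← hTeq k]
        exact g.convex x₀ _ x _ (hT k)
      have h2 : dist (g.γ x₀ x (T k)) (g.γ x₀ x tl) = |T k - tl| * dist x₀ x :=
        g.γ_dist x₀ x _ (hT k) _ htl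
      calc dist (gproj (u k : X)) (g.γ x₀ x tl)
          ≤ dist (gproj (u k : X)) (g.γ x₀ x (T k))
            + dist (g.γ x₀ x (T k)) (g.γ x₀ x tl) := dist_triangle _ _ _
        _ ≤ T k * dist ((u k : X)) x + |T k - tl| * dist x₀ x := by rw [h2]; gcongr
        _ ≤ dist ((u k : X)) x + |T k - tl| * dist x₀ x := by
            gcongr
            calc T k * dist ((u k : X)) x ≤ 1 * dist ((u k : X)) x := by
                  gcongr; exact (hT k).2
              _ = _ := one_mul _
    have hlim : Tendsto (fun n => dist ((u (ns (φ (ψ n))) : X)) x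
        + |T (ns (φ (ψ n))) - tl| * dist x₀ x) atTop (𝓝 0) := by
      have h1 : Tendsto (fun n => dist ((u (ns (φ (ψ n))) : X)) x) atTop (𝓝 0) :=
        tendsto_iff_dist_tendsto_zero.1 humX
      have h2 : Tendsto (fun n => |T (ns (φ (ψ n))) - tl| * dist x₀ x) atTop (𝓝 0) := by
        have h3 : Tendsto (fun n => |T (ns (φ (ψ n))) - tl|) atTop (𝓝 0) := by
          have := (htconv'.sub_const tl).abs
          simpa using this
        simpa using h3.mul_const (dist x₀ x)
      simpa using h1.add h2
    exact squeeze_zero (fun n => dist_nonneg) hbound hlim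
  have hyeq : y = g.γ x₀ x tl := tendsto_nhds_unique hyconv' hconv2
  have hyf : g.γ x₀ x tl ∈ frontier D := hyeq ▸ hy
  have hfeq : g.γ x₀ x t' ∈ frontier D := ht'eq ▸ (hg x hx).1
  have hteq : tl = t' := star_uniq hD x htl ht' hyf hfeq
  have : gproj x = y := by rw [hyeq, hteq, ht'eq]
  rw [this]
  exact hyconv'
end

section
/- Let (Xₙ, hₙ) be an inverse sequence of compact metric spaces and suppose each bonding map hₙ : Xₙ₊₁ → Xₙ is a near-homeomorphism, i.e., a uniform limit of homeomorphisms. If each Xₙ is homeomorphic to the circle S¹, then the inverse limit lim← (Xₙ, hₙ) is homeomorphic to S¹. -/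
open Filter Topology

set_option linter.unusedSectionVars false

namespace Brown13

variable {X : ℕ → Type} [∀ n, MetricSpace (X n)]

/-- cast along an equality of indices -/
def castX (X : ℕ → Type) {i j : ℕ} (e : i = j) (x : X i) : X j := e ▸ x

@[simp] lemma castX_self (X : ℕ → Type) {i : ℕ} (e : i = i) (x : X i) :
    castX X e x = x := rfl

lemma castX_trans (X : ℕ → Type) {i j l : ℕ} (e1 : i = j) (e2 : j = l) (x : X i) :
    castX X e2 (castX X e1 x) = castX X (e1.trans e2) x := by subst e1; subst e2; rfl

variable (h : ∀ n, X (n+1) → X n)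

lemma h_castX {i j : ℕ} (e : i = j) (e2 : i+1 = j+1) (x : X (i+1)) :
    h j (castX X e2 x) = castX X e (h i x) := by subst e; rfl

/-- downward composite of bonding maps -/
def dn (m : ℕ) : (k : ℕ) → X (m+k) → X m
  | 0, x => x
  | (k+1), x => dn m k (h (m+k) x)

lemma dn_h (m k : ℕ) (x : X ((m+1)+k)) :
    h m (dn h (m+1) k x) =
      dn h m (k+1) (castX X (show (m+1)+k = m+(k+1) from Nat.succ_add m k) x) := by
  induction k with
  | zero => rfl
  | succ k ih =>
    show h m (dn h (m+1) k (h ((m+1)+k) x)) = dn h m (k+1) (h (m+(k+1)) (castX X _ x))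
    rw [h_castX h (show (m+1)+k = m+(k+1) from Nat.succ_add m k)
      (show (m+1)+(k+1) = (m+(k+1))+1 from Nat.succ_add m (k+1)), ih]

lemma dn_congr (m : ℕ) {k k' : ℕ} (e : k = k') (e2 : m + k = m + k') (x : X (m+k)) :
    dn h m k x = dn h m k' (castX X e2 x) := by subst e; rfl

lemma dn_thread (x : ∀ n, X n) (hx : ∀ n, h n (x (n+1)) = x n) (m k : ℕ) :
    dn h m k (x (m+k)) = x m := by
  induction k with
  | zero => rfl
  | succ k ih =>
    show dn h m k (h (m+k) (x (m+k+1))) = x m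
    rw [hx (m+k)]; exact ih

/-- upward thread built from sections of surjective bonding maps -/
noncomputable def upt (hs : ∀ n, Function.Surjective (h n)) (pt : ∀ n, X n) (n : ℕ)
    (a : X n) : (m : ℕ) → X m :=
  Nat.rec (if e : n = 0 then castX X e a else pt 0)
    (fun m u => if e : n = m+1 then castX X e a else (hs m u).choose)

lemma upt_zero (hs : ∀ n, Function.Surjective (h n)) (pt : ∀ n, X n) (n : ℕ) (a : X n) :
    upt h hs pt n a 0 = if e : n = 0 then castX X e a else pt 0 := rfl

lemma upt_succ (hs : ∀ n, Function.Surjective (h n)) (pt : ∀ n, X n) (n : ℕ) (a : X n)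
    (m : ℕ) :
    upt h hs pt n a (m+1) =
      if e : n = m+1 then castX X e a else (hs m (upt h hs pt n a m)).choose := rfl

lemma upt_self (hs : ∀ n, Function.Surjective (h n)) (pt : ∀ n, X n) (n : ℕ) (a : X n) :
    upt h hs pt n a n = a := by
  cases n with
  | zero => rw [upt_zero, dif_pos rfl]; exact castX_self X _ a
  | succ m => rw [upt_succ, dif_pos rfl]; exact castX_self X _ a

lemma upt_step (hs : ∀ n, Function.Surjective (h n)) (pt : ∀ n, X n) (n : ℕ) (a : X n)
    (m : ℕ) (hm : n ≤ m) : h m (upt h hs pt n a (m+1)) = upt h hs pt n a m := by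
  have hne : ¬ (n = m+1) := by omega
  rw [upt_succ, dif_neg hne]
  exact (hs m _).choose_spec

lemma thread_exists (hs : ∀ n, Function.Surjective (h n)) (pt : ∀ n, X n) (n : ℕ) (a : X n) :
    ∃ x : ∀ m, X m, (∀ m, h m (x (m+1)) = x m) ∧ x n = a := by
  refine ⟨fun m => if hm : m ≤ n then dn h m (n-m) (castX X (show n = m + (n-m) by omega) a)
    else upt h hs pt n a m, fun m => ?_, ?_⟩
  · dsimp only
    by_cases hm : m + 1 ≤ n
    · have hm' : m ≤ n := by omega
      rw [dif_pos hm, dif_pos hm']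
      rw [dn_h h m (n-(m+1)), castX_trans,
        dn_congr h m (show (n-(m+1))+1 = n-m by omega) (show m + ((n-(m+1))+1) = m + (n-m) by omega),
        castX_trans]
    · by_cases hm2 : m ≤ n
      · have hmn : m = n := by omega
        subst hmn
        rw [dif_neg (show ¬ m+1 ≤ m by omega), dif_pos le_rfl]
        rw [upt_step h hs pt m a m le_rfl, upt_self,
          dn_congr h m (show m - m = 0 by omega) (show m + (m-m) = m + 0 by omega),
          castX_trans]
        rfl
      · rw [dif_neg (show ¬ m+1 ≤ n by omega), dif_neg hm2]
        exact upt_step h hs pt n a m (by omega)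
  · dsimp only
    rw [dif_pos le_rfl,
      dn_congr h n (show n - n = 0 by omega) (show n + (n-n) = n + 0 by omega), castX_trans]
    rfl

/-- uniform modulus of continuity on a compact metric space -/
lemma umod {A B : Type} [MetricSpace A] [MetricSpace B] [CompactSpace A] {f : A → B}
    (hf : Continuous f) {ε : ℝ} (hε : 0 < ε) :
    ∃ δ > 0, ∀ a b : A, dist a b < δ → dist (f a) (f b) < ε := by
  obtain ⟨δ, hδ, hp⟩ := Metric.uniformContinuous_iff.1
    (CompactSpace.uniformContinuous_of_continuous hf) ε hε
  exact ⟨δ, hδ, fun a b hab => hp hab⟩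

lemma alpha_aux [∀ n, CompactSpace (X n)] (hc : ∀ n, Continuous (h n)) (n : ℕ) :
    ∀ (ε : ℝ), 0 < ε → ∃ α > 0, ∀ m k (_ : m + k = n) (a b : X (m+k)),
      dist a b < α → dist (dn h m k a) (dn h m k b) < ε := by
  induction n with
  | zero =>
    intro ε hε
    refine ⟨ε, hε, ?_⟩
    rintro m k e a b hab
    have hk : k = 0 := by omega
    subst hk
    exact hab
  | succ n ih =>
    intro ε hε
    obtain ⟨α₀, hα₀, hprop⟩ := ih ε hε
    obtain ⟨α₁, hα₁, hmod⟩ := umod (hc n) hα₀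
    refine ⟨min ε α₁, by positivity, ?_⟩
    rintro m k e a b hab
    cases k with
    | zero => exact lt_of_lt_of_le hab (min_le_left _ _)
    | succ k' =>
      have e' : m + k' = n := by omega
      subst e'
      show dist (dn h m k' (h (m+k') a)) (dn h m k' (h (m+k') b)) < ε
      exact hprop m k' rfl _ _ (hmod a b (lt_of_lt_of_le hab (min_le_right _ _)))

lemma h_surj [∀ n, CompactSpace (X n)] (hc : ∀ n, Continuous (h n))
    (hnear : ∀ n, ∀ ε > 0, ∃ φ : X (n+1) ≃ₜ X n, ∀ x, dist (h n x) (φ x) < ε) (n : ℕ) :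
    Function.Surjective (h n) := by
  intro y
  have hy : y ∈ closure (Set.range (h n)) := by
    rw [Metric.mem_closure_iff]
    intro ε hε
    obtain ⟨φ, hφ⟩ := hnear n ε hε
    refine ⟨h n (φ.symm y), ⟨_, rfl⟩, ?_⟩
    have := hφ (φ.symm y)
    rw [φ.apply_symm_apply] at this
    rw [dist_comm]
    exact this
  rwa [(isCompact_range (hc n)).isClosed.closure_eq] at hy

end Brown13
namespace Brown13

variable {X : ℕ → Type} [∀ n, MetricSpace (X n)]

/-- state of the recursive construction: a homeomorphism to `X 0` and a small constant -/
structure St (X : ℕ → Type) [∀ n, MetricSpace (X n)] (α : ℕ → ℝ) (n : ℕ) where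
  H : X n ≃ₜ X 0
  d : ℝ
  dpos : 0 < d
  dle : d ≤ (1/2)^n
  mod : ∀ a b : X 0, dist a b ≤ 4*d → dist (H.symm a) (H.symm b) < α n

variable [∀ n, CompactSpace (X n)] (h : ∀ n, X (n+1) → X n)

lemma step_ex (hnear : ∀ n, ∀ ε > 0, ∃ φ : X (n+1) ≃ₜ X n, ∀ x, dist (h n x) (φ x) < ε)
    {α : ℕ → ℝ} (hα : ∀ n, 0 < α n) (n : ℕ) (s : St X α n) :
    ∃ t : St X α (n+1), ∃ φ : X (n+1) ≃ₜ X n,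
      t.H = φ.trans s.H ∧ (∀ x, dist (s.H (h n x)) (s.H (φ x)) < s.d) ∧ 2 * t.d ≤ s.d := by
  obtain ⟨ε, hε, hεmod⟩ := umod s.H.continuous s.dpos
  obtain ⟨φ, hφ⟩ := hnear n ε hε
  obtain ⟨β, hβ, hβmod⟩ := umod (φ.trans s.H).symm.continuous (hα (n+1))
  have hdpos : 0 < min ((1/2:ℝ)^(n+1)) (min (s.d/2) (β/8)) := by
    have := s.dpos; positivity
  refine ⟨⟨φ.trans s.H, min ((1/2)^(n+1)) (min (s.d/2) (β/8)), hdpos, min_le_left _ _, ?_⟩,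
    φ, rfl, fun x => hεmod _ _ (hφ x), ?_⟩
  · intro a b hab
    apply hβmod
    have h1 : min ((1/2:ℝ)^(n+1)) (min (s.d/2) (β/8)) ≤ β/8 :=
      le_trans (min_le_right _ _) (min_le_right _ _)
    calc dist a b ≤ 4 * min ((1/2:ℝ)^(n+1)) (min (s.d/2) (β/8)) := hab
      _ ≤ 4 * (β/8) := by linarith
      _ < β := by linarith
  · have h1 : min ((1/2:ℝ)^(n+1)) (min (s.d/2) (β/8)) ≤ s.d/2 :=
      le_trans (min_le_right _ _) (min_le_left _ _)
    simp only
    linarith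

noncomputable def stBase {α : ℕ → ℝ} (hα : ∀ n, 0 < α n) : St X α 0 where
  H := Homeomorph.refl (X 0)
  d := min 1 (α 0 / 8)
  dpos := by have := hα 0; positivity
  dle := by norm_num
  mod := by
    intro a b hab
    have := hα 0
    have h1 : min 1 (α 0 / 8) ≤ α 0 / 8 := min_le_right _ _
    simp only [Homeomorph.refl_symm, Homeomorph.refl_apply]
    calc dist a b ≤ 4 * min 1 (α 0/8) := hab
      _ ≤ 4 * (α 0/8) := by linarith
      _ < α 0 := by linarith

noncomputable def seqSt (hnear : ∀ n, ∀ ε > 0, ∃ φ : X (n+1) ≃ₜ X n, ∀ x, dist (h n x) (φ x) < ε)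
    {α : ℕ → ℝ} (hα : ∀ n, 0 < α n) : ∀ n, St X α n :=
  Nat.rec (stBase hα) (fun n s => (step_ex h hnear hα n s).choose)

lemma seqSt_spec (hnear : ∀ n, ∀ ε > 0, ∃ φ : X (n+1) ≃ₜ X n, ∀ x, dist (h n x) (φ x) < ε)
    {α : ℕ → ℝ} (hα : ∀ n, 0 < α n) (n : ℕ) :
    ∃ φ : X (n+1) ≃ₜ X n,
      (seqSt h hnear hα (n+1)).H = φ.trans (seqSt h hnear hα n).H ∧
      (∀ x, dist ((seqSt h hnear hα n).H (h n x)) ((seqSt h hnear hα n).H (φ x))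
        < (seqSt h hnear hα n).d) ∧
      2 * (seqSt h hnear hα (n+1)).d ≤ (seqSt h hnear hα n).d :=
  (step_ex h hnear hα n (seqSt h hnear hα n)).choose_spec

end Brown13


/-- Brown's theorem for circles: the inverse limit of an inverse sequence of compact
metric spaces, all homeomorphic to the circle, whose bonding maps are
near-homeomorphisms (uniform limits of homeomorphisms), is homeomorphic to the circle. -/
theorem stmt13 (X : ℕ → Type) [∀ n, MetricSpace (X n)] [∀ n, CompactSpace (X n)]
    (h : ∀ n, X (n+1) → X n) (hc : ∀ n, Continuous (h n))
    (hnear : ∀ n, ∀ ε > 0, ∃ φ : X (n+1) ≃ₜ X n, ∀ x, dist (h n x) (φ x) < ε)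
    (hcirc : ∀ n, Nonempty (X n ≃ₜ Metric.sphere (0:ℂ) 1)) :
    Nonempty ({x : ∀ n, X n // ∀ n, h n (x (n+1)) = x n} ≃ₜ Metric.sphere (0:ℂ) 1) := by
  classical
  haveI hne : ∀ n, Nonempty (X n) := fun n => ⟨(hcirc n).some.symm ⟨1, by simp⟩⟩
  have pt : ∀ n, X n := fun n => Classical.arbitrary _
  have hs : ∀ n, Function.Surjective (h n) := Brown13.h_surj h hc hnear
  -- compactness of the inverse limit
  have hcl : IsClosed {x : ∀ n, X n | ∀ n, h n (x (n+1)) = x n} := by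
    have he : {x : ∀ n, X n | ∀ n, h n (x (n+1)) = x n}
        = ⋂ n, {x : ∀ n, X n | h n (x (n+1)) = x n} := by
      ext x; simp [Set.mem_iInter]
    rw [he]
    exact isClosed_iInter fun n =>
      isClosed_eq ((hc n).comp (continuous_apply (n+1))) (continuous_apply n)
  haveI : CompactSpace {x : ∀ n, X n // ∀ n, h n (x (n+1)) = x n} :=
    isCompact_iff_compactSpace.mp hcl.isCompact
  -- moduli for the downward composites
  have hαex : ∀ n, ∃ α > 0, ∀ m k (_ : m + k = n) (a b : X (m+k)),
      dist a b < α → dist (Brown13.dn h m k a) (Brown13.dn h m k b) < (1/2)^n :=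
    fun n => Brown13.alpha_aux h hc n ((1/2)^n) (by positivity)
  choose α hαpos hαprop using hαex
  -- the recursive construction
  choose φ hφH hφd hφdd using fun n => Brown13.seqSt_spec h hnear hαpos n
  set S := Brown13.seqSt h hnear hαpos with hS
  set F0 : ℕ → {x : ∀ n, X n // ∀ n, h n (x (n+1)) = x n} → X 0 :=
    fun n y => (S n).H (y.1 n) with hF0
  have hdpos : ∀ n, 0 < (S n).d := fun n => (S n).dpos
  have hdle : ∀ n, (S n).d ≤ (1/2)^n := fun n => (S n).dle
  have hstep : ∀ n y, dist (F0 (n+1) y) (F0 n y) ≤ (S n).d := by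
    intro n y
    have e1 : F0 (n+1) y = (S n).H ((φ n) (y.1 (n+1))) := by
      simp only [hF0]
      rw [hφH n, Homeomorph.trans_apply]
    have e2 : F0 n y = (S n).H (h n (y.1 (n+1))) := by
      simp only [hF0]
      rw [← y.2 n]
    rw [e1, e2, dist_comm]
    exact (hφd n (y.1 (n+1))).le
  have htail : ∀ j y k, dist (F0 (j+k) y) (F0 j y) ≤ 2*(S j).d - 2*(S (j+k)).d := by
    intro j y k
    induction k with
    | zero => simp
    | succ k ih =>
      show dist (F0 (j+k+1) y) (F0 j y) ≤ 2*(S j).d - 2*(S (j+k+1)).d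
      have h1 := hstep (j+k) y
      have h2 := hφdd (j+k)
      calc dist (F0 (j+k+1) y) (F0 j y)
          ≤ dist (F0 (j+k+1) y) (F0 (j+k) y) + dist (F0 (j+k) y) (F0 j y) :=
            dist_triangle _ _ _
        _ ≤ 2*(S j).d - 2*(S (j+k+1)).d := by linarith
  have hcauchy : ∀ y, ∃ c, Tendsto (fun n => F0 n y) atTop (𝓝 c) := by
    intro y
    apply cauchySeq_tendsto_of_complete
    apply cauchySeq_of_le_geometric (1/2 : ℝ) 1 (by norm_num)
    intro n
    rw [dist_comm]
    calc dist (F0 (n+1) y) (F0 n y) ≤ (S n).d := hstep n y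
      _ ≤ (1/2)^n := hdle n
      _ = 1 * (1/2)^n := (one_mul _).symm
  choose F hFt using hcauchy
  have hlim : ∀ j y, dist (F y) (F0 j y) ≤ 2*(S j).d := by
    intro j y
    refine le_of_tendsto ((hFt y).dist tendsto_const_nhds) ?_
    rw [eventually_atTop]
    refine ⟨j, fun m hm => ?_⟩
    obtain ⟨k, rfl⟩ := Nat.exists_eq_add_of_le hm
    have h1 := htail j y k
    have h2 := hdpos (j+k)
    linarith
  have hd0 : Tendsto (fun n => 2*(S n).d) atTop (𝓝 0) := by
    have hg : Tendsto (fun n : ℕ => 2*((1:ℝ)/2)^n) atTop (𝓝 0) := by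
      have := tendsto_pow_atTop_nhds_zero_of_lt_one
        (by norm_num : (0:ℝ) ≤ 1/2) (by norm_num : (1/2:ℝ) < 1)
      simpa using this.const_mul (2:ℝ)
    exact squeeze_zero (fun n => by have := hdpos n; linarith)
      (fun n => by have := hdle n; linarith) hg
  have hFu : TendstoUniformly F0 F atTop := by
    rw [Metric.tendstoUniformly_iff]
    intro ε hε
    filter_upwards [hd0.eventually_lt_const hε] with n hn y
    exact lt_of_le_of_lt (hlim n y) hn
  have hFcont : Continuous F :=
    hFu.continuous (Eventually.frequently (Eventually.of_forall fun n =>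
      ((S n).H.continuous).comp ((continuous_apply n).comp continuous_subtype_val)))
  have hinj : Function.Injective F := by
    intro y z he
    apply Subtype.ext; funext n
    have key : ∀ k, dist (y.1 n) (z.1 n) < (1/2)^(n+k) := by
      intro k
      have a1 := hlim (n+k) y
      have a2 := hlim (n+k) z
      rw [he] at a1
      have h4 : dist (F0 (n+k) y) (F0 (n+k) z) ≤ 4*(S (n+k)).d := by
        calc dist (F0 (n+k) y) (F0 (n+k) z)
            ≤ dist (F0 (n+k) y) (F z) + dist (F z) (F0 (n+k) z) := dist_triangle _ _ _
          _ ≤ 4*(S (n+k)).d := by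
              rw [dist_comm (F0 (n+k) y) (F z)]
              linarith
      have h5 := (S (n+k)).mod _ _ h4
      simp only [hF0] at h5
      rw [(S (n+k)).H.symm_apply_apply, (S (n+k)).H.symm_apply_apply] at h5
      have h6 := hαprop (n+k) n k rfl _ _ h5
      rwa [Brown13.dn_thread h y.1 y.2 n k, Brown13.dn_thread h z.1 z.2 n k] at h6
    have hle : dist (y.1 n) (z.1 n) ≤ 0 := by
      have ht : Tendsto (fun k => ((1:ℝ)/2)^(n+k)) atTop (𝓝 0) := by
        have h1 : (fun k => ((1:ℝ)/2)^(n+k)) = fun k => (1/2)^n * (1/2)^k := by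
          funext k; rw [pow_add]
        rw [h1]
        simpa using (tendsto_pow_atTop_nhds_zero_of_lt_one
          (by norm_num : (0:ℝ) ≤ 1/2) (by norm_num : (1/2:ℝ) < 1)).const_mul (((1:ℝ)/2)^n)
      exact ge_of_tendsto ht (Eventually.of_forall fun k => (key k).le)
    exact dist_le_zero.mp hle
  have hsur : Function.Surjective F := by
    intro c
    have hc2 : c ∈ closure (Set.range F) := by
      rw [Metric.mem_closure_iff]
      intro ε hε
      obtain ⟨j, hj⟩ := (hd0.eventually_lt_const hε).exists
      obtain ⟨x, hx1, hx2⟩ := Brown13.thread_exists h hs pt j ((S j).H.symm c)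
      refine ⟨F ⟨x, hx1⟩, Set.mem_range_self _, ?_⟩
      have e1 : F0 j ⟨x, hx1⟩ = c := by
        simp only [hF0]
        rw [hx2, (S j).H.apply_symm_apply]
      rw [dist_comm]
      calc dist (F ⟨x, hx1⟩) c = dist (F ⟨x, hx1⟩) (F0 j ⟨x, hx1⟩) := by rw [e1]
        _ ≤ 2*(S j).d := hlim j _
        _ < ε := hj
    rwa [(isCompact_range hFcont).isClosed.closure_eq] at hc2
  have hbij : Function.Bijective F := ⟨hinj, hsur⟩
  have hcont : Continuous (Equiv.ofBijective F hbij) := hFcont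
  exact ⟨(Continuous.homeoOfEquivCompactToT2 hcont).trans (hcirc 0).some⟩
end

section
/- Let X be a nonempty compact metric space, and suppose X admits a countable infinite family A of pairwise disjoint closed connected subsets such that: (a2) A is null (diameters tend to 0), (a3) each member of A has dense complement in X, (a4) the union of A is dense in X, and (a5) any two points of X not in a common member of A are separated by an open-closed A-saturated subset. Then the quotient space X/A obtained by collapsing each member of A to a point is homeomorphic to the Cantor set. -/
open Metric Set
set_option linter.unusedSectionVars false
set_option linter.unusedVariables false
set_option maxHeartbeats 1000000

section cantorchar
variable {Y : Type} [MetricSpace Y] [CompactSpace Y]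

theorem my_part_of_cover : ∀ (cs : List (Set Y)), (∀ C ∈ cs, IsClopen C) →
    ∀ U : Set Y, IsClopen U → U ⊆ ⋃ C ∈ cs, C →
    ∃ L : List (Set Y), (∀ W ∈ L, W.Nonempty ∧ IsClopen W ∧ W ⊆ U ∧ ∃ C ∈ cs, W ⊆ C)
      ∧ L.Pairwise Disjoint ∧ (⋃ W ∈ L, W) = U := by
  intro cs
  induction cs with
  | nil =>
    intro _ U _ hsub
    refine ⟨[], by simp, by simp, ?_⟩
    simp only [List.not_mem_nil, iUnion_of_empty, iUnion_empty]
    simp only [List.not_mem_nil, iUnion_of_empty, iUnion_empty] at hsub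
    exact (subset_empty_iff.mp hsub).symm
  | cons C rest ih =>
    intro hcs U hU hsub
    have hC : IsClopen C := hcs C (List.mem_cons_self)
    have hU2 : IsClopen (U \ C) := hU.inter hC.compl
    have hsub2 : U \ C ⊆ ⋃ C' ∈ rest, C' := by
      intro x hx
      have := hsub hx.1
      simp only [List.mem_cons, iUnion_iUnion_eq_or_left] at this
      rcases this with h | h
      · exact absurd h hx.2
      · exact h
    obtain ⟨L₂, hL₂p, hL₂d, hL₂u⟩ := ih (fun C' hC' => hcs C' (List.mem_cons_of_mem _ hC')) (U \ C) hU2 hsub2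
    by_cases hne : (U ∩ C).Nonempty
    · refine ⟨(U ∩ C) :: L₂, ?_, ?_, ?_⟩
      · intro W hW
        rcases List.mem_cons.mp hW with rfl | hW
        · exact ⟨hne, hU.inter hC, inter_subset_left, C, List.mem_cons_self, inter_subset_right⟩
        · obtain ⟨h1, h2, h3, C', hC', h4⟩ := hL₂p W hW
          exact ⟨h1, h2, h3.trans diff_subset, C', List.mem_cons_of_mem _ hC', h4⟩
      · refine List.pairwise_cons.mpr ⟨?_, hL₂d⟩
        intro W hW
        exact Set.disjoint_left.mpr fun x hx hxW => ((hL₂p W hW).2.2.1 hxW).2 hx.2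
      · simp only [List.mem_cons, iUnion_iUnion_eq_or_left, hL₂u]
        exact Set.inter_union_diff U C
    · refine ⟨L₂, ?_, hL₂d, ?_⟩
      · intro W hW
        obtain ⟨h1, h2, h3, C', hC', h4⟩ := hL₂p W hW
        exact ⟨h1, h2, h3.trans diff_subset, C', List.mem_cons_of_mem _ hC', h4⟩
      · rw [hL₂u]
        refine Set.eq_of_subset_of_subset diff_subset fun x hx => ⟨hx, fun hc => ?_⟩
        exact Set.eq_empty_iff_forall_notMem.mp (Set.not_nonempty_iff_eq_empty.mp hne) x ⟨hx, hc⟩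

theorem my_good_part [TotallyDisconnectedSpace Y]
    (hts : ∀ a b : Y, a ≠ b → ∃ C : Set Y, IsClopen C ∧ a ∈ C ∧ b ∉ C)
    (hperf : ∀ O : Set Y, IsOpen O → O.Nonempty → ∃ a ∈ O, ∃ b ∈ O, a ≠ b)
    (ε : ℝ) (hε : 0 < ε) (U : Set Y) (hU : IsClopen U) (hne : U.Nonempty) :
    ∃ L : List (Set Y), 2 ≤ L.length ∧
      (∀ W ∈ L, W.Nonempty ∧ IsClopen W ∧ W ⊆ U ∧ Metric.diam W ≤ ε)
      ∧ L.Pairwise Disjoint ∧ (⋃ W ∈ L, W) = U := by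
  have hbd : ∀ s : Set Y, Bornology.IsBounded s := fun s =>
    (isCompact_univ.isBounded).subset (subset_univ s)
  -- small partition
  have hsmall : ∃ L : List (Set Y),
      (∀ W ∈ L, W.Nonempty ∧ IsClopen W ∧ W ⊆ U ∧ Metric.diam W ≤ ε)
      ∧ L.Pairwise Disjoint ∧ (⋃ W ∈ L, W) = U := by
    have hv : ∀ x : Y, ∃ V : Set Y, IsClopen V ∧ x ∈ V ∧ V ⊆ ball x (ε/2) :=
      fun x => compact_exists_isClopen_in_isOpen isOpen_ball (mem_ball_self (by positivity))
    choose V hV1 hV2 hV3 using hv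
    obtain ⟨t, ht⟩ := (hU.isClosed.isCompact).elim_finite_subcover (fun x : Y => V x)
      (fun x => (hV1 x).isOpen) (fun x hx => mem_iUnion.mpr ⟨x, hV2 x⟩)
    obtain ⟨L, hLp, hLd, hLu⟩ := my_part_of_cover (t.toList.map V)
      (by intro C hC; simp only [List.mem_map, Finset.mem_toList] at hC
          obtain ⟨x, _, rfl⟩ := hC; exact hV1 x) U hU
      (by intro x hx
          have := ht hx
          simp only [mem_iUnion, exists_prop] at this
          obtain ⟨i, hit, hxi⟩ := this
          simp only [mem_iUnion, List.mem_map, Finset.mem_toList, exists_prop]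
          exact ⟨V i, ⟨i, hit, rfl⟩, hxi⟩)
    refine ⟨L, fun W hW => ?_, hLd, hLu⟩
    obtain ⟨h1, h2, h3, C, hC, h4⟩ := hLp W hW
    simp only [List.mem_map, Finset.mem_toList] at hC
    obtain ⟨x, _, rfl⟩ := hC
    refine ⟨h1, h2, h3, ?_⟩
    calc Metric.diam W ≤ Metric.diam (ball x (ε/2)) :=
          Metric.diam_mono (h4.trans (hV3 x)) isBounded_ball
      _ ≤ 2 * (ε/2) := diam_ball (by positivity)
      _ = ε := by ring
  obtain ⟨L, hLp, hLd, hLu⟩ := hsmall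
  match L, hLp, hLd, hLu with
  | [], _, _, hLu =>
    exfalso
    rw [show (⋃ W ∈ ([] : List (Set Y)), W) = ∅ by simp] at hLu
    exact hne.ne_empty hLu.symm
  | [W], hLp, _, hLu =>
    have hWU : W = U := by simpa using hLu
    subst hWU
    obtain ⟨a, ha, b, hb, hab⟩ := hperf W hU.isOpen hne
    obtain ⟨C, hC, haC, hbC⟩ := hts a b hab
    refine ⟨[W ∩ C, W \ C], by simp, ?_, ?_, ?_⟩
    · intro W' hW'
      have hd := (hLp W (by simp)).2.2.2
      rcases List.mem_cons.mp hW' with rfl | hW'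
      · exact ⟨⟨a, ha, haC⟩, hU.inter hC, inter_subset_left,
          le_trans (Metric.diam_mono inter_subset_left (hbd W)) hd⟩
      · have : W' = W \ C := by simpa using hW'
        subst this
        exact ⟨⟨b, hb, hbC⟩, hU.inter hC.compl, diff_subset,
          le_trans (Metric.diam_mono diff_subset (hbd W)) hd⟩
    · refine List.pairwise_cons.mpr ⟨?_, by simp⟩
      intro W' hW'
      have : W' = W \ C := by simpa using hW'
      subst this
      exact Set.disjoint_left.mpr fun x hx hx' => hx'.2 hx.2
    · simp only [List.mem_cons, List.not_mem_nil, or_false, iUnion_iUnion_eq_or_left,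
        iUnion_iUnion_eq_left]
      exact Set.inter_union_diff W C
  | W₁ :: W₂ :: rest, hLp, hLd, hLu =>
    exact ⟨W₁ :: W₂ :: rest, by simp [Nat.succ_le_succ], hLp, hLd, hLu⟩

def cVV (st : ℕ × List (Set Y)) : Set Y := ⋃ W ∈ st.2, W

def cValid (st : ℕ × List (Set Y)) : Prop :=
  st.2 ≠ [] ∧ (∀ W ∈ st.2, W.Nonempty ∧ IsClopen W ∧ Metric.diam W ≤ 1/(st.1+1))
    ∧ st.2.Pairwise Disjoint

def csplit (pick : ℕ → Set Y → List (Set Y)) (st : ℕ × List (Set Y)) (b : Bool) :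
    ℕ × List (Set Y) :=
  if st.2.length ≤ 1 then
    (st.1+1, if b then (pick (st.1+1) st.2.headI).tail else [(pick (st.1+1) st.2.headI).headI])
  else (st.1, if b then st.2.tail else [st.2.headI])

def PickGood (pick : ℕ → Set Y → List (Set Y)) : Prop :=
  ∀ n U, IsClopen U → U.Nonempty →
    2 ≤ (pick n U).length ∧
    (∀ W ∈ pick n U, W.Nonempty ∧ IsClopen W ∧ W ⊆ U ∧ Metric.diam W ≤ 1/(n+1)) ∧
    (pick n U).Pairwise Disjoint ∧ (⋃ W ∈ pick n U, W) = U

theorem csplit_facts {pick : ℕ → Set Y → List (Set Y)} (hpick : PickGood pick)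
    (st : ℕ × List (Set Y)) (hv : cValid st) :
    (∀ b, cValid (csplit pick st b)) ∧
    (cVV (csplit pick st false) ∪ cVV (csplit pick st true) = cVV st) ∧
    Disjoint (cVV (csplit pick st false)) (cVV (csplit pick st true)) ∧
    (∀ b, st.1 ≤ (csplit pick st b).1) ∧
    (st.2.length = 1 → ∀ b, (csplit pick st b).1 = st.1 + 1) ∧
    (2 ≤ st.2.length → ∀ b, (csplit pick st b).1 = st.1 ∧
      (csplit pick st b).2.length < st.2.length) := by
  obtain ⟨n, L⟩ := st
  obtain ⟨hLne, hLp, hLd⟩ := hv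
  obtain ⟨W, t, rfl⟩ := List.exists_cons_of_ne_nil hLne
  rcases t with _ | ⟨W₂, t⟩
  · -- singleton case
    have hlen : (W :: ([] : List (Set Y))).length ≤ 1 := by simp
    have hW := hLp W (by simp)
    obtain ⟨h2len, hprop, hdisj, huni⟩ := hpick (n+1) W hW.2.1 hW.1
    set L' := pick (n+1) W with hL'
    have hL'ne : L' ≠ [] := List.ne_nil_of_length_pos (by omega)
    obtain ⟨W0, t0, h0⟩ := List.exists_cons_of_ne_nil hL'ne
    have ht0ne : t0 ≠ [] := by
      intro h; rw [h] at h0; rw [h0] at h2len; simp at h2len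
    have hsplitf : csplit pick (n, [W]) false = (n+1, [L'.headI]) := by
      simp [csplit, hL']
    have hsplitt : csplit pick (n, [W]) true = (n+1, L'.tail) := by
      simp [csplit, hL']
    have hheadI : L'.headI = W0 := by rw [h0]; simp
    have htail : L'.tail = t0 := by rw [h0]; simp
    have hmemW0 : W0 ∈ L' := by rw [h0]; exact List.mem_cons_self
    have hmem_t0 : ∀ W' ∈ t0, W' ∈ L' := by
      intro W' hW'; rw [h0]; exact List.mem_cons_of_mem _ hW'
    refine ⟨?_, ?_, ?_, ?_, ?_, ?_⟩
    · intro b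
      cases b
      · rw [hsplitf]
        refine ⟨by simp, ?_, by simp⟩
        intro W' hW'
        simp only [List.mem_singleton] at hW'
        subst hW'
        rw [hheadI]
        obtain ⟨a1, a2, _, a4⟩ := hprop W0 hmemW0
        exact ⟨a1, a2, a4⟩
      · rw [hsplitt]
        refine ⟨by rw [htail]; exact ht0ne, ?_, ?_⟩
        · intro W' hW'
          rw [htail] at hW'
          obtain ⟨a1, a2, _, a4⟩ := hprop W' (hmem_t0 _ hW')
          exact ⟨a1, a2, a4⟩
        · exact hdisj.sublist (List.tail_sublist L')
    · rw [hsplitf, hsplitt]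
      have : cVV (n, [W]) = W := by simp [cVV]
      rw [this]
      have h1 : cVV (n+1, [L'.headI]) = W0 := by simp [cVV, hheadI]
      have h2 : cVV (n+1, L'.tail) = ⋃ W' ∈ t0, W' := by rw [cVV, htail]
      rw [h1, h2, ← huni, h0]
      simp [List.mem_cons, iUnion_iUnion_eq_or_left]
    · rw [hsplitf, hsplitt]
      have h1 : cVV (n+1, [L'.headI]) = W0 := by simp [cVV, hheadI]
      have h2 : cVV (n+1, L'.tail) = ⋃ W' ∈ t0, W' := by rw [cVV, htail]
      rw [h1, h2]
      rw [h0] at hdisj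
      rw [List.pairwise_cons] at hdisj
      rw [Set.disjoint_iUnion_right]
      intro W'
      rw [Set.disjoint_iUnion_right]
      intro hW'
      exact hdisj.1 W' hW'
    · intro b; cases b
      · rw [hsplitf]; omega
      · rw [hsplitt]; omega
    · intro _ b; cases b
      · rw [hsplitf]
      · rw [hsplitt]
    · intro h; simp at h
  · -- length ≥ 2 case
    have hlen : ¬ (W :: W₂ :: t).length ≤ 1 := by simp
    have hsplitf : csplit pick (n, W :: W₂ :: t) false = (n, [W]) := by
      simp [csplit]
    have hsplitt : csplit pick (n, W :: W₂ :: t) true = (n, W₂ :: t) := by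
      simp [csplit]
    refine ⟨?_, ?_, ?_, ?_, ?_, ?_⟩
    · intro b; cases b
      · rw [hsplitf]
        refine ⟨by simp, ?_, by simp⟩
        intro Z hZ
        simp only [List.mem_singleton] at hZ
        subst hZ
        exact hLp Z (by simp)
      · rw [hsplitt]
        exact ⟨by simp, fun Z hZ => hLp Z (List.mem_cons_of_mem _ hZ),
          hLd.of_cons⟩
    · rw [hsplitf, hsplitt]
      simp only [cVV]
      simp [List.mem_cons, iUnion_iUnion_eq_or_left]
    · rw [hsplitf, hsplitt]
      simp only [cVV]
      rw [List.pairwise_cons] at hLd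
      simp only [List.mem_singleton, iUnion_iUnion_eq_left]
      rw [Set.disjoint_iUnion_right]
      intro W'
      rw [Set.disjoint_iUnion_right]
      intro hW'
      exact hLd.1 W' hW'
    · intro b; cases b
      · rw [hsplitf]
      · rw [hsplitt]
    · intro h; simp at h
    · intro _ b; cases b
      · rw [hsplitf]; exact ⟨rfl, by simp⟩
      · rw [hsplitt]; exact ⟨rfl, by simp⟩

def cnode (pick : ℕ → Set Y → List (Set Y)) (s : List Bool) : ℕ × List (Set Y) :=
  s.foldl (csplit pick) (0, pick 0 univ)
def cV (pick : ℕ → Set Y → List (Set Y)) (s : List Bool) : Set Y := cVV (cnode pick s)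
def cpre (σ : ℕ → Bool) (k : ℕ) : List Bool := (List.range k).map σ

theorem cpre_succ (σ : ℕ → Bool) (k : ℕ) : cpre σ (k+1) = cpre σ k ++ [σ k] := by
  simp [cpre, List.range_succ]

theorem cnode_append (pick : ℕ → Set Y → List (Set Y)) (s : List Bool) (b : Bool) :
    cnode pick (s ++ [b]) = csplit pick (cnode pick s) b := by
  simp [cnode, List.foldl_append]

theorem cnode_valid [Nonempty Y] {pick : ℕ → Set Y → List (Set Y)} (hpick : PickGood pick) :
    ∀ s, cValid (cnode pick s) := by
  intro s
  induction s using List.reverseRecOn with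
  | nil =>
    obtain ⟨h1, h2, h3, _⟩ := hpick 0 univ isClopen_univ univ_nonempty
    show cValid (0, pick 0 univ)
    refine ⟨List.ne_nil_of_length_pos (show 0 < (pick 0 univ).length by omega), ?_, h3⟩
    intro W hW
    refine ⟨(h2 W hW).1, (h2 W hW).2.1, ?_⟩
    have h4 := (h2 W hW).2.2.2
    norm_num at h4 ⊢
    exact h4
  | append_singleton s b ih =>
    rw [cnode_append]
    exact (csplit_facts hpick _ ih).1 b

theorem cV_union [Nonempty Y] {pick : ℕ → Set Y → List (Set Y)} (hpick : PickGood pick)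
    (s : List Bool) :
    (cV pick (s++[false]) ∪ cV pick (s++[true]) = cV pick s) ∧
    Disjoint (cV pick (s++[false])) (cV pick (s++[true])) := by
  have h := csplit_facts hpick _ (cnode_valid hpick s)
  constructor
  · show cVV (cnode pick (s++[false])) ∪ cVV (cnode pick (s++[true])) = cVV (cnode pick s)
    rw [cnode_append, cnode_append]; exact h.2.1
  · show Disjoint (cVV (cnode pick (s++[false]))) (cVV (cnode pick (s++[true])))
    rw [cnode_append, cnode_append]; exact h.2.2.1

theorem cV_subset [Nonempty Y] {pick : ℕ → Set Y → List (Set Y)} (hpick : PickGood pick)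
    (s : List Bool) (b : Bool) : cV pick (s++[b]) ⊆ cV pick s := by
  rcases b
  · rw [← (cV_union hpick s).1]; exact subset_union_left
  · rw [← (cV_union hpick s).1]; exact subset_union_right

theorem cVV_props (st : ℕ × List (Set Y)) (hv : cValid st) :
    (cVV st).Nonempty ∧ IsClosed (cVV st) ∧ IsOpen (cVV st) := by
  obtain ⟨hne, hp, _⟩ := hv
  obtain ⟨W, t, h⟩ := List.exists_cons_of_ne_nil hne
  refine ⟨⟨(hp W (by rw [h]; exact List.mem_cons_self)).1.some, ?_⟩, ?_, ?_⟩
  · exact Set.mem_biUnion (by rw [h]; exact List.mem_cons_self)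
      (hp W (by rw [h]; exact List.mem_cons_self)).1.some_mem
  · exact Set.Finite.isClosed_biUnion (st.2.finite_toSet)
      (fun W hW => (hp W hW).2.1.isClosed)
  · exact isOpen_biUnion (fun W hW => (hp W hW).2.1.isOpen)

theorem cVV_diam (st : ℕ × List (Set Y)) (hv : cValid st) (h1 : st.2.length = 1) :
    Metric.diam (cVV st) ≤ 1/(st.1+1) := by
  obtain ⟨W, hW⟩ := List.length_eq_one_iff.mp h1
  have : cVV st = W := by rw [cVV, hW]; simp
  rw [this]
  exact (hv.2.1 W (by rw [hW]; exact List.mem_cons_self)).2.2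

theorem my_cantor_char (Y : Type) [MetricSpace Y] [CompactSpace Y] [Nonempty Y]
    (hts : ∀ a b : Y, a ≠ b → ∃ C : Set Y, IsClopen C ∧ a ∈ C ∧ b ∉ C)
    (hperf : ∀ O : Set Y, IsOpen O → O.Nonempty → ∃ a ∈ O, ∃ b ∈ O, a ≠ b) :
    Nonempty ((ℕ → Bool) ≃ₜ Y) := by
  haveI : TotallySeparatedSpace Y := totallySeparatedSpace_iff_exists_isClopen.mpr
    (fun x y hxy => by
      obtain ⟨C, h1, h2, h3⟩ := hts x y hxy
      exact ⟨C, h1, h2, h3⟩)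
  have hbd : ∀ s : Set Y, Bornology.IsBounded s := fun s =>
    (isCompact_univ.isBounded).subset (subset_univ s)
  -- choose the pick function
  have hex : ∀ (n : ℕ) (U : Set Y), ∃ L : List (Set Y), IsClopen U → U.Nonempty →
      (2 ≤ L.length ∧ (∀ W ∈ L, W.Nonempty ∧ IsClopen W ∧ W ⊆ U ∧ Metric.diam W ≤ 1/(n+1))
        ∧ L.Pairwise Disjoint ∧ (⋃ W ∈ L, W) = U) := by
    intro n U
    by_cases h : IsClopen U ∧ U.Nonempty
    · obtain ⟨L, hL⟩ := my_good_part hts hperf (1/(n+1)) (by positivity) U h.1 h.2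
      exact ⟨L, fun _ _ => hL⟩
    · exact ⟨[], fun h1 h2 => absurd ⟨h1, h2⟩ h⟩
  choose pick hpick' using hex
  have hpick : PickGood pick := fun n U h1 h2 => hpick' n U h1 h2
  clear hpick'
  -- basic properties of the scheme
  have hval : ∀ s, cValid (cnode pick s) := cnode_valid hpick
  have hVne : ∀ s, (cV pick s).Nonempty := fun s => (cVV_props _ (hval s)).1
  have hVcl : ∀ s, IsClosed (cV pick s) := fun s => (cVV_props _ (hval s)).2.1
  -- nested along branches
  have hVmono : ∀ (σ : ℕ → Bool) (k : ℕ), cV pick (cpre σ (k+1)) ⊆ cV pick (cpre σ k) := by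
    intro σ k
    rw [cpre_succ]
    exact cV_subset hpick _ _
  have hVmono' : ∀ (σ : ℕ → Bool) (j k : ℕ), j ≤ k →
      cV pick (cpre σ k) ⊆ cV pick (cpre σ j) := by
    intro σ j k hjk
    induction k, hjk using Nat.le_induction with
    | base => exact subset_rfl
    | succ k hjk ih => exact (hVmono σ k).trans ih
  -- n increases along each branch
  have hnmono : ∀ (σ : ℕ → Bool) (j k : ℕ), j ≤ k →
      (cnode pick (cpre σ j)).1 ≤ (cnode pick (cpre σ k)).1 := by
    intro σ j k hjk
    induction k, hjk using Nat.le_induction with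
    | base => exact le_rfl
    | succ k hjk ih =>
      refine ih.trans ?_
      rw [cpre_succ, cnode_append]
      exact (csplit_facts hpick _ (hval _)).2.2.2.1 (σ k)
  have reach1 : ∀ (j : ℕ) (σ : ℕ → Bool) (k : ℕ), (cnode pick (cpre σ k)).2.length ≤ j →
      ∃ k' ≥ k, (cnode pick (cpre σ k')).2.length = 1 := by
    intro j
    induction j with
    | zero =>
      intro σ k hk
      exfalso
      have := (hval (cpre σ k)).1
      rw [← List.length_pos_iff] at this
      omega
    | succ j ih =>
      intro σ k hk
      by_cases h1 : (cnode pick (cpre σ k)).2.length = 1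
      · exact ⟨k, le_rfl, h1⟩
      · have h2 : 2 ≤ (cnode pick (cpre σ k)).2.length := by
          have := (hval (cpre σ k)).1
          rw [← List.length_pos_iff] at this
          omega
        have hf := (csplit_facts hpick _ (hval (cpre σ k))).2.2.2.2.2 h2 (σ k)
        have hlt : (cnode pick (cpre σ (k+1))).2.length ≤ j := by
          rw [cpre_succ, cnode_append]
          omega
        obtain ⟨k', hk', h⟩ := ih σ (k+1) hlt
        exact ⟨k', le_trans (Nat.le_succ k) hk', h⟩
  have nbig : ∀ (σ : ℕ → Bool) (m : ℕ), ∃ k, (cnode pick (cpre σ k)).2.length = 1 ∧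
      m ≤ (cnode pick (cpre σ k)).1 := by
    intro σ m
    induction m with
    | zero =>
      obtain ⟨k, _, h⟩ := reach1 _ σ 0 le_rfl
      exact ⟨k, h, Nat.zero_le _⟩
    | succ m ih =>
      obtain ⟨k, hk1, hkm⟩ := ih
      have hstep : (cnode pick (cpre σ (k+1))).1 = (cnode pick (cpre σ k)).1 + 1 := by
        rw [cpre_succ, cnode_append]
        exact (csplit_facts hpick _ (hval _)).2.2.2.2.1 hk1 (σ k)
      obtain ⟨k', hk', h1⟩ := reach1 _ σ (k+1) le_rfl
      refine ⟨k', h1, ?_⟩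
      have := hnmono σ (k+1) k' hk'
      omega
  have hdiam : ∀ (σ : ℕ → Bool) (ε : ℝ), 0 < ε → ∃ k, ∀ k' ≥ k,
      Metric.diam (cV pick (cpre σ k')) ≤ ε := by
    intro σ ε hε
    obtain ⟨m, hm⟩ := exists_nat_one_div_lt hε
    obtain ⟨k, hk1, hkm⟩ := nbig σ m
    refine ⟨k, fun k' hk' => ?_⟩
    calc Metric.diam (cV pick (cpre σ k')) ≤ Metric.diam (cV pick (cpre σ k)) :=
          Metric.diam_mono (hVmono' σ k k' hk') (hbd _)
      _ ≤ 1/((cnode pick (cpre σ k)).1+1) := cVV_diam _ (hval _) hk1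
      _ ≤ 1/(m+1) := by
          apply one_div_le_one_div_of_le (by positivity)
          have : (m:ℝ) ≤ ((cnode pick (cpre σ k)).1 : ℝ) := by exact_mod_cast hkm
          linarith
      _ ≤ ε := hm.le
  -- the point map
  have hinter : ∀ σ : ℕ → Bool, (⋂ k, cV pick (cpre σ k)).Nonempty := by
    intro σ
    exact IsCompact.nonempty_iInter_of_sequence_nonempty_isCompact_isClosed _
      (hVmono σ) (fun k => hVne _) ((hVcl _).isCompact) (fun k => hVcl _)
  choose f hf using hinter
  have hfmem : ∀ σ k, f σ ∈ cV pick (cpre σ k) := by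
    intro σ k
    have := hf σ
    rw [Set.mem_iInter] at this
    exact this k
  have huniq : ∀ (σ : ℕ → Bool) (x y : Y), (∀ k, x ∈ cV pick (cpre σ k)) →
      (∀ k, y ∈ cV pick (cpre σ k)) → x = y := by
    intro σ x y hx hy
    rw [← dist_le_zero]
    refine le_of_forall_gt_imp_ge_of_dense fun ε hε => ?_
    obtain ⟨k, hk⟩ := hdiam σ ε hε
    exact le_trans (Metric.dist_le_diam_of_mem (hbd _) (hx k) (hy k)) (hk k le_rfl)
  -- injectivity
  have hinj : Function.Injective f := by
    intro σ τ hστ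
    by_contra hne
    have hex2 : ∃ k, σ k ≠ τ k := by
      by_contra h
      push_neg at h
      exact hne (funext h)
    classical
    let k := Nat.find hex2
    have hkne : σ k ≠ τ k := Nat.find_spec hex2
    have hagree : ∀ i < k, σ i = τ i := fun i hi => by
      have := Nat.find_min hex2 hi
      exact not_not.mp this
    have hpre : cpre σ k = cpre τ k := by
      apply List.map_congr_left
      intro i hi
      exact hagree i (List.mem_range.mp hi)
    have hdisjk := (cV_union hpick (cpre σ k)).2
    have h1 : f σ ∈ cV pick (cpre σ k ++ [σ k]) := by rw [← cpre_succ]; exact hfmem σ (k+1)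
    have h2 : f τ ∈ cV pick (cpre σ k ++ [τ k]) := by
      rw [hpre, ← cpre_succ]; exact hfmem τ (k+1)
    rw [hστ] at h1
    rcases Bool.eq_false_or_eq_true (σ k) with hσk | hσk <;>
      rcases Bool.eq_false_or_eq_true (τ k) with hτk | hτk
    · exact hkne (hσk.trans hτk.symm)
    · rw [hσk] at h1; rw [hτk] at h2
      exact Set.disjoint_left.mp hdisjk h2 h1
    · rw [hσk] at h1; rw [hτk] at h2
      exact Set.disjoint_left.mp hdisjk h1 h2
    · exact hkne (hσk.trans hτk.symm)
  -- surjectivity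
  have hVnil : cV pick [] = univ := by
    have := hpick 0 univ isClopen_univ univ_nonempty
    show cVV (cnode pick []) = univ
    show cVV (0, pick 0 univ) = univ
    exact this.2.2.2
  have hsurj : Function.Surjective f := by
    intro x
    classical
    let pfx : ℕ → List Bool := fun k => Nat.rec []
      (fun _ ih => ih ++ [if x ∈ cV pick (ih ++ [true]) then true else false]) k
    have hpfx0 : pfx 0 = [] := rfl
    have hpfxs : ∀ k, pfx (k+1) = pfx k ++ [if x ∈ cV pick (pfx k ++ [true]) then true else false] :=
      fun k => rfl
    let σ : ℕ → Bool := fun k => if x ∈ cV pick (pfx k ++ [true]) then true else false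
    have hpre : ∀ k, cpre σ k = pfx k := by
      intro k
      induction k with
      | zero => rfl
      | succ k ih => rw [cpre_succ, ih, hpfxs]
    have hmem : ∀ k, x ∈ cV pick (pfx k) := by
      intro k
      induction k with
      | zero => rw [hpfx0, hVnil]; exact mem_univ x
      | succ k ih =>
        rw [hpfxs]
        by_cases h : x ∈ cV pick (pfx k ++ [true])
        · rw [if_pos h]
          exact h
        · rw [if_neg h]
          have := (cV_union hpick (pfx k)).1
          rw [← this] at ih
          rcases ih with h' | h'
          · exact h'
          · exact absurd h' h
    refine ⟨σ, ?_⟩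
    refine huniq σ (f σ) x (fun k => hfmem σ k) (fun k => ?_)
    rw [hpre]
    exact hmem k
  -- continuity
  have hcont : Continuous f := by
    rw [continuous_iff_continuousAt]
    intro σ
    rw [ContinuousAt, Metric.tendsto_nhds]
    intro ε hε
    obtain ⟨k, hk⟩ := hdiam σ (ε/2) (by positivity)
    have hopen : IsOpen {τ : ℕ → Bool | ∀ i, i < k → τ i = σ i} := by
      have : {τ : ℕ → Bool | ∀ i, i < k → τ i = σ i} =
          ⋂ i : Fin k, (fun τ : ℕ → Bool => τ i.1) ⁻¹' ({σ i.1} : Set Bool) := by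
        ext τ
        simp only [Set.mem_setOf_eq, Set.mem_iInter]
        exact ⟨fun h i => h i.1 i.2, fun h i hi => h ⟨i, hi⟩⟩
      rw [this]
      exact isOpen_iInter_of_finite fun i =>
        (isOpen_discrete ({σ i.1} : Set Bool)).preimage (continuous_apply (i.1 : ℕ))
    have hmemnhds : {τ : ℕ → Bool | ∀ i, i < k → τ i = σ i} ∈ nhds σ :=
      hopen.mem_nhds (fun i _ => rfl)
    filter_upwards [hmemnhds] with τ hτ
    have hpre : cpre τ k = cpre σ k := by
      apply List.map_congr_left
      intro i hi
      exact hτ i (List.mem_range.mp hi)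
    have h1 : f τ ∈ cV pick (cpre σ k) := by rw [← hpre]; exact hfmem τ k
    have h2 : f σ ∈ cV pick (cpre σ k) := hfmem σ k
    calc dist (f τ) (f σ) ≤ Metric.diam (cV pick (cpre σ k)) :=
          Metric.dist_le_diam_of_mem (hbd _) h1 h2
      _ ≤ ε/2 := hk k le_rfl
      _ < ε := by linarith
  exact ⟨(Continuous.homeoOfEquivCompactToT2 (f := Equiv.ofBijective f ⟨hinj, hsurj⟩) hcont)⟩

end cantorchar

/-- If a nonempty compact metric space `X` carries a countably infinite family `A` of
pairwise disjoint closed connected subsets which is null (diameters tend to 0), each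
member having dense complement, with dense union, and such that any two points not in
a common member of `A` are separated by an open-closed `A`-saturated set, then the
quotient of `X` obtained by collapsing each member of `A` to a point is homeomorphic
to the Cantor set `{0,1}^ℕ`. -/
theorem stmt19 (X : Type) [MetricSpace X] [CompactSpace X] [Nonempty X]
    (A : ℕ → Set X) (hinj : Function.Injective A)
    (hcl : ∀ n, IsClosed (A n)) (hconn : ∀ n, IsConnected (A n))
    (hdisj : ∀ m n, m ≠ n → Disjoint (A m) (A n))
    (hnull : Filter.Tendsto (fun n => Metric.diam (A n)) Filter.atTop (nhds 0))
    (hbdry : ∀ n, Dense ((A n)ᶜ))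
    (hdense : Dense (⋃ n, A n))
    (hsep : ∀ x y : X, x ≠ y → (¬ ∃ n, x ∈ A n ∧ y ∈ A n) →
      ∃ H : Set X, IsOpen H ∧ IsClosed H ∧ x ∈ H ∧ y ∉ H ∧
        ∀ n, A n ⊆ H ∨ Disjoint (A n) H) :
    Nonempty ((Quot (fun x y : X => x = y ∨ ∃ n, x ∈ A n ∧ y ∈ A n)) ≃ₜ (ℕ → Bool)) := by
  classical
  set r : X → X → Prop := fun x y => x = y ∨ ∃ n, x ∈ A n ∧ y ∈ A n with hr
  have req : Equivalence r := by
    constructor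
    · intro x; exact Or.inl rfl
    · intro x y h
      rcases h with rfl | ⟨n, h1, h2⟩
      · exact Or.inl rfl
      · exact Or.inr ⟨n, h2, h1⟩
    · intro x y z hxy hyz
      rcases hxy with rfl | ⟨m, hxm, hym⟩
      · exact hyz
      · rcases hyz with rfl | ⟨n, hyn, hzn⟩
        · exact Or.inr ⟨m, hxm, hym⟩
        · have hmn : m = n := by
            by_contra h
            exact Set.disjoint_left.mp (hdisj m n h) hym hyn
          subst hmn
          exact Or.inr ⟨m, hxm, hzn⟩
  set Q := Quot r with hQ
  let π : X → Q := Quot.mk r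
  have hπcont : Continuous π := continuous_quot_mk
  have hπsurj : Function.Surjective π := Quot.exists_rep
  have key : ∀ a b : X, π a = π b ↔ r a b := fun a b => Quot.eq.trans req.eqvGen_iff
  have hqm := isQuotientMap_quot_mk (r := r)
  -- saturation
  have hsat : ∀ (H : Set X), (∀ n, A n ⊆ H ∨ Disjoint (A n) H) →
      π ⁻¹' (π '' H) = H := by
    intro H hH
    apply Set.eq_of_subset_of_subset
    · rintro z ⟨w, hwH, hwz⟩
      rcases (key w z).mp hwz with rfl | ⟨n, hwn, hzn⟩
      · exact hwH
      · rcases hH n with h | h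
        · exact h hzn
        · exact absurd hwH (Set.disjoint_left.mp h hwn)
    · intro z hz
      exact ⟨z, hz, rfl⟩
  -- clopen separation in Q
  have htsQ : ∀ a b : Q, a ≠ b → ∃ C : Set Q, IsClopen C ∧ a ∈ C ∧ b ∉ C := by
    intro a b hab
    obtain ⟨x, rfl⟩ := hπsurj a
    obtain ⟨y, rfl⟩ := hπsurj b
    have hnr : ¬ r x y := fun h => hab ((key x y).mpr h)
    have hxy : x ≠ y := fun h => hnr (Or.inl h)
    have hnc : ¬ ∃ n, x ∈ A n ∧ y ∈ A n := fun h => hnr (Or.inr h)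
    obtain ⟨H, hHo, hHc, hxH, hyH, hHsat⟩ := hsep x y hxy hnc
    have hpre : π ⁻¹' (π '' H) = H := hsat H hHsat
    refine ⟨π '' H, ⟨?_, ?_⟩, ⟨x, hxH, rfl⟩, ?_⟩
    · rw [← hqm.isClosed_preimage, hpre]; exact hHc
    · rw [← hqm.isOpen_preimage, hpre]; exact hHo
    · intro hyim
      have : y ∈ π ⁻¹' (π '' H) := hyim
      rw [hpre] at this
      exact hyH this
  haveI : T2Space Q := by
    constructor
    intro a b hab
    obtain ⟨C, hC, haC, hbC⟩ := htsQ a b hab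
    exact ⟨C, Cᶜ, hC.isOpen, hC.compl.isOpen, haC, hbC, disjoint_compl_right⟩
  haveI : CompactSpace Q := Quot.compactSpace
  haveI : Nonempty Q := Nonempty.map π ‹_›
  -- second countability
  haveI : SecondCountableTopology Q := by
    have hclosedmap : IsClosedMap π := fun s hs =>
      ((hs.isCompact).image hπcont).isClosed
    obtain ⟨bX, hbXc, -, hbXb⟩ := TopologicalSpace.exists_countable_basis X
    let F : Set (Set X) → Set Q := fun T => (π '' (⋃₀ T)ᶜ)ᶜ
    have hcount : (F '' {T | T.Finite ∧ T ⊆ bX}).Countable :=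
      (Set.countable_setOf_finite_subset hbXc).image F
    have hbasis : TopologicalSpace.IsTopologicalBasis (F '' {T | T.Finite ∧ T ⊆ bX}) := by
      refine TopologicalSpace.isTopologicalBasis_of_isOpen_of_nhds ?_ ?_
      · rintro V ⟨T, ⟨hTf, hTb⟩, rfl⟩
        have hopen : IsOpen (⋃₀ T) := isOpen_sUnion fun t ht => hbXb.isOpen (hTb ht)
        exact (hclosedmap _ hopen.isClosed_compl).isOpen_compl
      · intro q u hqu hu
        have hKc : IsCompact (π ⁻¹' {q}) :=
          (IsClosed.preimage hπcont isClosed_singleton).isCompact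
        have hKu : π ⁻¹' {q} ⊆ π ⁻¹' u := fun x hx => by
          rw [Set.mem_preimage] at hx ⊢
          rw [hx]; exact hqu
        have hBx : ∀ x : X, x ∈ π ⁻¹' {q} → ∃ B ∈ bX, x ∈ B ∧ B ⊆ π ⁻¹' u := by
          intro x hx
          exact hbXb.exists_subset_of_mem_open (hKu hx) (hu.preimage hπcont)
        choose! B hB1 hB2 hB3 using hBx
        obtain ⟨t, ht⟩ := hKc.elim_finite_subcover
          (fun x : π ⁻¹' {q} => B x.1)
          (fun x => hbXb.isOpen (hB1 x.1 x.2))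
          (fun x hx => Set.mem_iUnion.mpr ⟨⟨x, hx⟩, hB2 x hx⟩)
        refine ⟨F ((fun x : (π ⁻¹' {q} : Set X) => B x.1) '' ↑t), ⟨_, ⟨?_, ?_⟩, rfl⟩, ?_, ?_⟩
        · exact (t.finite_toSet.image _)
        · rintro _ ⟨x, hx, rfl⟩
          exact hB1 x.1 x.2
        · -- q ∈ F T
          intro hq
          obtain ⟨z, hz, hzq⟩ := hq
          apply hz
          have hzK : z ∈ π ⁻¹' {q} := by rw [Set.mem_preimage, hzq]; rfl
          have := ht hzK
          simp only [Set.mem_iUnion, exists_prop] at this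
          obtain ⟨x, hxt, hzB⟩ := this
          exact ⟨B x.1, ⟨x, Finset.mem_coe.mpr hxt, rfl⟩, hzB⟩
        · -- F T ⊆ u
          intro p hp
          obtain ⟨z, rfl⟩ := hπsurj p
          have hzT : z ∈ ⋃₀ ((fun x : (π ⁻¹' {q} : Set X) => B x.1) '' ↑t) := by
            by_contra h
            exact hp ⟨z, h, rfl⟩
          obtain ⟨_, ⟨x, hxt, rfl⟩, hzB⟩ := hzT
          exact hB3 x.1 x.2 hzB
    exact hbasis.secondCountableTopology hcount
  haveI : TopologicalSpace.MetrizableSpace Q := by infer_instance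
  letI : MetricSpace Q := TopologicalSpace.metrizableSpaceMetric Q
  -- perfectness
  have hperfQ : ∀ O : Set Q, IsOpen O → O.Nonempty → ∃ a ∈ O, ∃ b ∈ O, a ≠ b := by
    intro O hO hOne
    obtain ⟨q, hq⟩ := hOne
    obtain ⟨x, rfl⟩ := hπsurj q
    have hxU : x ∈ π ⁻¹' O := hq
    have hU : IsOpen (π ⁻¹' O) := hO.preimage hπcont
    by_cases hx : ∃ n, x ∈ A n
    · obtain ⟨n, hxn⟩ := hx
      obtain ⟨y, hyU, hyA⟩ := (hbdry n).inter_open_nonempty _ hU ⟨x, hxU⟩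
      refine ⟨π y, hyU, π x, hq, ?_⟩
      intro h
      rcases (key y x).mp h with rfl | ⟨m, hym, hxm⟩
      · exact hyA hxn
      · have hmn : m = n := by
          by_contra hne
          exact Set.disjoint_left.mp (hdisj m n hne) hxm hxn
        subst hmn
        exact hyA hym
    · obtain ⟨y, hyU, hyA⟩ := hdense.inter_open_nonempty _ hU ⟨x, hxU⟩
      obtain ⟨_, ⟨n, rfl⟩, hyn⟩ := hyA
      refine ⟨π x, hq, π y, hyU, ?_⟩
      intro h
      rcases (key x y).mp h with rfl | ⟨m, hxm, _⟩
      · exact hx ⟨n, hyn⟩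
      · exact hx ⟨m, hxm⟩
  obtain ⟨e⟩ := my_cantor_char Q htsQ hperfQ
  exact ⟨e.symm⟩
end
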